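/- arXiv:1608.06793 — 5 statements merged into one kernel-verified Lean document; each statement's English description precedes it below -/
import Mathlib

section
/- Let L be a finite-dimensional solvable Lie algebra. If r is the smallest integer such that N_r(L) = L (upper nilpotent series) and s is the smallest integer such that Γ_s(L) = 0 (lower nilpotent series), then Γ_{s-i}(L) ⊆ N_i(L) for i = 0,...,r. -/
/-- The canonical quotient map `L → L ⧸ I` as a morphism of Lie algebras. -/
def lieQuotMk {F L : Type*} [Field F] [LieRing L] [LieAlgebra F L] (I : LieIdeal F L) :
    L →ₗ⁅F⁆ L ⧸ I where
  toLinearMap := (LieSubmodule.Quotient.mk' I).toLinearMap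
  map_lie' := rfl

variable (F : Type*) [Field F]

/-- The nilradical: the largest nilpotent ideal of a (finite-dimensional) Lie algebra. -/
noncomputable def nilrad (L : Type*) [LieRing L] [LieAlgebra F L] : LieIdeal F L :=
  sSup {I : LieIdeal F L | LieRing.IsNilpotent I}

/-- The upper nilpotent series: `N 0 = 0`, `N (i+1) / N i = nilradical of L ⧸ N i`. -/
noncomputable def upperNil (L : Type*) [LieRing L] [LieAlgebra F L] : ℕ → LieIdeal F L
  | 0 => ⊥
  | n + 1 => LieIdeal.comap (lieQuotMk (upperNil L n)) (nilrad F (L ⧸ upperNil L n))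

/-- The nilpotent length: the least `n` with `N n = L`. -/
noncomputable def nilLen (L : Type*) [LieRing L] [LieAlgebra F L] : ℕ :=
  sInf {n : ℕ | upperNil F L n = ⊤}

/-- The nilpotent residual `γ∞(L)`: the smallest ideal with nilpotent quotient. -/
noncomputable def nilResidual (L : Type*) [LieRing L] [LieAlgebra F L] : LieIdeal F L :=
  sInf {I : LieIdeal F L | LieRing.IsNilpotent (L ⧸ I)}

/-- The lower nilpotent series: `Γ 0 = L`, `Γ (i+1) = γ∞(Γ i)`, viewed as subalgebras of `L`. -/
noncomputable def lowerNil (L : Type*) [LieRing L] [LieAlgebra F L] : ℕ → LieSubalgebra F L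
  | 0 => ⊤
  | n + 1 =>
      LieSubalgebra.map (lowerNil L n).incl
        (LieIdeal.toLieSubalgebra F (lowerNil L n) (nilResidual F (lowerNil L n)))

/-- `M` is a maximal (proper) subalgebra of `L`. -/
def IsMaxSub {L : Type*} [LieRing L] [LieAlgebra F L] (M : LieSubalgebra F L) : Prop :=
  M ≠ ⊤ ∧ ∀ K : LieSubalgebra F L, M < K → K = ⊤

/-- The Frattini subalgebra: the intersection of all maximal subalgebras. -/
noncomputable def lieFrattini (L : Type*) [LieRing L] [LieAlgebra F L] : LieSubalgebra F L :=
  sInf {M : LieSubalgebra F L | IsMaxSub F M}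

/-- The core of a subalgebra `U`: the largest ideal of `L` contained in `U`. -/
noncomputable def lieCore {L : Type*} [LieRing L] [LieAlgebra F L] (U : LieSubalgebra F L) :
    LieIdeal F L :=
  sSup {I : LieIdeal F L | (I : Set L) ⊆ (U : Set L)}

/-- `A` is a minimal ideal of `L`. -/
def IsMinIdeal {L : Type*} [LieRing L] [LieAlgebra F L] (A : LieIdeal F L) : Prop :=
  A ≠ ⊥ ∧ ∀ B : LieIdeal F L, B < A → B = ⊥

/-- The Frattini series: `φ i (L) / N (i-1) (L) = φ(L ⧸ N (i-1) (L))` for `i ≥ 1`. -/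
noncomputable def fratSeries (L : Type*) [LieRing L] [LieAlgebra F L] (i : ℕ) :
    LieSubalgebra F L :=
  LieSubalgebra.comap (lieQuotMk (upperNil F L (i - 1)))
    (lieFrattini F (L ⧸ upperNil F L (i - 1)))

/-- `L` is extreme: `N i (L) / φ i (L)` is a chief factor of `L` for each `1 ≤ i ≤ n(L)`. -/
def IsExtremeLie (L : Type*) [LieRing L] [LieAlgebra F L] : Prop :=
  ∀ i, 1 ≤ i → i ≤ nilLen F L →
    (fratSeries F L i : Set L) ⊆ (upperNil F L i : Set L) ∧
    (fratSeries F L i : Set L) ≠ (upperNil F L i : Set L) ∧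
    ∀ C : LieIdeal F L, (fratSeries F L i : Set L) ⊆ (C : Set L) → C ≤ upperNil F L i →
      (C : Set L) = (fratSeries F L i : Set L) ∨ C = upperNil F L i

/-- `L` is supersolvable: it has a chain of ideals with one-dimensional quotients. -/
def IsSupersolvable (L : Type*) [LieRing L] [LieAlgebra F L] : Prop :=
  ∃ (n : ℕ) (C : ℕ → LieIdeal F L), C 0 = ⊥ ∧ C n = ⊤ ∧
    ∀ i < n, C i ≤ C (i + 1) ∧
      Module.finrank F (C (i + 1)) = Module.finrank F (C i) + 1

/-- A minimal ideal `A` is complemented if some maximal subalgebra `M` satisfies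
`L = A + M` and `A ∩ M = 0`. -/
def IsComplementedIdeal {L : Type*} [LieRing L] [LieAlgebra F L] (A : LieIdeal F L) : Prop :=
  ∃ M : LieSubalgebra F L, IsMaxSub F M ∧
    A.toSubmodule ⊔ M.toSubmodule = ⊤ ∧ A.toSubmodule ⊓ M.toSubmodule = ⊥
section Aux
variable {F}

lemma lieQuotMk_surj {L : Type*} [LieRing L] [LieAlgebra F L] (I : LieIdeal F L) :
    Function.Surjective (lieQuotMk (F := F) I) :=
  fun y => LieSubmodule.Quotient.surjective_mk' I y

lemma lieQuotMk_eq_zero_iff {L : Type*} [LieRing L] [LieAlgebra F L] (I : LieIdeal F L)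
    (x : L) : lieQuotMk (F := F) I x = 0 ↔ x ∈ I :=
  LieSubmodule.Quotient.mk_eq_zero I

example {L : Type*} [LieRing L] [LieAlgebra F L] [FiniteDimensional F L]
    (K : LieSubalgebra F L) : FiniteDimensional F K := inferInstance

lemma upperNil_succ_def {L : Type*} [LieRing L] [LieAlgebra F L] (n : ℕ) :
    upperNil F L (n+1)
      = LieIdeal.comap (lieQuotMk (upperNil F L n)) (nilrad F (L ⧸ upperNil F L n)) := rfl

lemma lowerNil_succ_def {L : Type*} [LieRing L] [LieAlgebra F L] (n : ℕ) :
    lowerNil F L (n+1)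
      = LieSubalgebra.map (lowerNil F L n).incl
          (LieIdeal.toLieSubalgebra F (lowerNil F L n) (nilResidual F (lowerNil F L n))) := rfl

lemma nilResidual_eq_lcs (M : Type*) [LieRing M] [LieAlgebra F M] [FiniteDimensional F M] :
    ∃ k, nilResidual F M = LieModule.lowerCentralSeries F M M k := by
  obtain ⟨k, hk⟩ := IsArtinian.monotone_stabilizes
    (⟨fun n => LieSubmodule.toSubmodule (LieModule.lowerCentralSeries F M M n),
      fun a b hab => (LieSubmodule.toSubmodule_le_toSubmodule _ _).mpr
        (LieModule.antitone_lowerCentralSeries F M M hab)⟩ : ℕ →o (Submodule F M)ᵒᵈ)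
  have hstab : ∀ j, k ≤ j → LieModule.lowerCentralSeries F M M j = LieModule.lowerCentralSeries F M M k :=
    fun j hj => ((LieSubmodule.toSubmodule_inj _ _).mp (hk j hj)).symm
  refine ⟨k, le_antisymm (sInf_le ?_) (le_sInf ?_)⟩
  · show LieRing.IsNilpotent (M ⧸ LieModule.lowerCentralSeries F M M k)
    refine (LieModule.isNilpotent_iff F _ _).mpr ⟨k, ?_⟩
    rw [← LieIdeal.lowerCentralSeries_map_eq k (lieQuotMk_surj _), LieIdeal.map_eq_bot_iff]
    intro x hx
    rw [LieHom.mem_ker]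
    exact (lieQuotMk_eq_zero_iff _ x).mpr hx
  · intro I hI
    obtain ⟨j, hj⟩ := (LieModule.isNilpotent_iff F _ _).mp (hI : LieRing.IsNilpotent (M ⧸ I))
    have hle : LieModule.lowerCentralSeries F M M j ≤ I := by
      have hmap : LieIdeal.map (lieQuotMk I) (LieModule.lowerCentralSeries F M M j) = ⊥ := by
        rw [LieIdeal.lowerCentralSeries_map_eq j (lieQuotMk_surj I), hj]
      rw [LieIdeal.map_eq_bot_iff] at hmap
      intro x hx
      have hx2 := hmap hx
      rw [LieHom.mem_ker] at hx2
      exact (lieQuotMk_eq_zero_iff I x).mp hx2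
    rcases le_or_gt j k with h | h
    · exact le_trans (LieModule.antitone_lowerCentralSeries F M M h) hle
    · rw [← hstab j h.le]; exact hle

end Aux

section Aux2
variable {F}

lemma lcs_image_stable {L : Type*} [LieRing L] [LieAlgebra F L] (K : LieSubalgebra F L)
    (hK : ∀ (y x : L), x ∈ K → ⁅y, x⁆ ∈ K) :
    ∀ (m : ℕ) (y z : L),
      z ∈ Submodule.map K.incl.toLinearMap
        (LieSubmodule.toSubmodule (LieModule.lowerCentralSeries F K K m)) →
      ⁅y, z⁆ ∈ Submodule.map K.incl.toLinearMap
        (LieSubmodule.toSubmodule (LieModule.lowerCentralSeries F K K m)) := by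
  intro m
  induction m with
  | zero =>
    rintro y z ⟨w, -, rfl⟩
    have h1 : ⁅y, (w : L)⁆ ∈ K := hK y w w.2
    exact ⟨⟨⁅y, (w : L)⁆, h1⟩, by simp, rfl⟩
  | succ m ih =>
    have hgen : ∀ (w : ↥K) (z : L),
        z ∈ Submodule.map K.incl.toLinearMap
          (LieSubmodule.toSubmodule (LieModule.lowerCentralSeries F K K m)) →
        ⁅(w : L), z⁆ ∈ Submodule.map K.incl.toLinearMap
          (LieSubmodule.toSubmodule (LieModule.lowerCentralSeries F K K (m+1))) := by
      rintro w z ⟨n, hn, rfl⟩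
      refine ⟨⁅w, n⁆, ?_, ?_⟩
      · rw [LieModule.lowerCentralSeries_succ]
        exact LieSubmodule.lie_mem_lie (LieSubmodule.mem_top w) hn
      · simp
    intro y z hz
    rw [LieModule.lowerCentralSeries_succ] at hz
    rw [LieSubmodule.lieIdeal_oper_eq_linear_span', Submodule.map_span] at hz
    refine Submodule.span_induction ?_ ?_ ?_ ?_ hz
    · rintro z ⟨v, ⟨x, -, n, hn, rfl⟩, rfl⟩
      have hxv : K.incl.toLinearMap ⁅x, n⁆ = ⁅(x : L), (n : L)⁆ := by simp
      rw [hxv, leibniz_lie]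
      have h1 : ⁅y, (x : L)⁆ ∈ K := hK y x x.2
      have t1 := hgen ⟨⁅y, (x : L)⁆, h1⟩ (n : L) ⟨n, hn, rfl⟩
      have t2 := hgen x ⁅y, (n : L)⁆ (ih y (n : L) ⟨n, hn, rfl⟩)
      exact Submodule.add_mem _ t1 t2
    · simp
    · intro a b _ _ ha hb
      rw [lie_add]
      exact Submodule.add_mem _ ha hb
    · intro c a _ ha
      rw [lie_smul]
      exact Submodule.smul_mem _ c ha

lemma mem_lowerNil_succ_iff {L : Type*} [LieRing L] [LieAlgebra F L] (n : ℕ) (x : L) :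
    x ∈ lowerNil F L (n+1) ↔
      ∃ y : ↥(lowerNil F L n), y ∈ nilResidual F (lowerNil F L n) ∧ (y : L) = x := by
  rw [lowerNil_succ_def, LieSubalgebra.mem_map]
  constructor
  · rintro ⟨y, hy, rfl⟩; exact ⟨y, hy, rfl⟩
  · rintro ⟨y, hy, rfl⟩; exact ⟨y, hy, rfl⟩

lemma lowerNil_stable {L : Type*} [LieRing L] [LieAlgebra F L] [FiniteDimensional F L] :
    ∀ (n : ℕ) (y x : L), x ∈ lowerNil F L n → ⁅y, x⁆ ∈ lowerNil F L n := by
  intro n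
  induction n with
  | zero => intro y x _; exact LieSubalgebra.mem_top _
  | succ n ih =>
    obtain ⟨k, hk⟩ := nilResidual_eq_lcs (F := F) ↥(lowerNil F L n)
    intro y x hx
    rw [mem_lowerNil_succ_iff] at hx ⊢
    obtain ⟨w, hw, rfl⟩ := hx
    rw [hk] at hw
    obtain ⟨v, hv, hveq⟩ := lcs_image_stable (lowerNil F L n) ih k y _ ⟨w, hw, rfl⟩
    exact ⟨v, by rw [hk]; exact hv, hveq⟩

lemma upperNil_le_succ {L : Type*} [LieRing L] [LieAlgebra F L] (i : ℕ) :
    upperNil F L i ≤ upperNil F L (i+1) := by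
  intro x hx
  rw [upperNil_succ_def]
  show lieQuotMk (upperNil F L i) x ∈ nilrad F _
  rw [(lieQuotMk_eq_zero_iff (upperNil F L i) x).mpr hx]
  exact (nilrad F _).zero_mem

end Aux2


/-- If `r` is least with `N r (L) = L` and `s` is least with `Γ s (L) = 0`, then
`Γ (s - i) (L) ⊆ N i (L)` for `i = 0, …, r`. -/
theorem stmt0 {F L : Type*} [Field F] [LieRing L] [LieAlgebra F L]
    [FiniteDimensional F L] [LieAlgebra.IsSolvable L] (r s : ℕ)
    (hr : upperNil F L r = ⊤) (hrmin : ∀ m < r, upperNil F L m ≠ ⊤)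
    (hs : lowerNil F L s = ⊥) (hsmin : ∀ m < s, lowerNil F L m ≠ ⊥) :
    ∀ i ≤ r, ∀ x : L, x ∈ lowerNil F L (s - i) → x ∈ upperNil F L i := by
  suffices h : ∀ i, ∀ x : L, x ∈ lowerNil F L (s - i) → x ∈ upperNil F L i from
    fun i _ x hx => h i x hx
  intro i
  induction i with
  | zero =>
    intro x hx
    rw [Nat.sub_zero, hs, LieSubalgebra.mem_bot] at hx
    rw [hx]
    exact (upperNil F L 0).zero_mem
  | succ i ih =>
    rcases le_or_gt s i with hsi | his
    · have h1 : s - (i+1) = s - i := by omega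
      intro x hx
      rw [h1] at hx
      exact upperNil_le_succ i (ih x hx)
    · have h1 : s - i = (s - (i+1)) + 1 := by omega
      set n := s - (i+1) with hn
      set K : LieSubalgebra F L := lowerNil F L n with hK
      obtain ⟨k, hk⟩ := nilResidual_eq_lcs (F := F) ↥K
      set Ni := upperNil F L i with hNi
      set π : L →ₗ⁅F⁆ L ⧸ Ni := lieQuotMk Ni with hπ
      have hKst : ∀ (y x : L), x ∈ K → ⁅y, x⁆ ∈ K := lowerNil_stable n
      set f : ↥K →ₗ⁅F⁆ L ⧸ Ni := π.comp K.incl with hf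
      set J : LieIdeal F (L ⧸ Ni) :=
        { LinearMap.range f.toLinearMap with
          lie_mem := by
            intro q m hm
            obtain ⟨w, rfl⟩ := hm
            obtain ⟨z, rfl⟩ := lieQuotMk_surj Ni q
            have hm2 : ⁅z, (w : L)⁆ ∈ K := hKst z w w.2
            refine ⟨⟨⁅z, (w : L)⁆, hm2⟩, ?_⟩
            show π ⁅z, (w : L)⁆ = ⁅π z, f.toLinearMap w⁆
            rw [LieHom.map_lie]
            rfl } with hJ
      have hmemJ : ∀ w : ↥K, f w ∈ J := fun w => ⟨w, rfl⟩
      set g : ↥K →ₗ⁅F⁆ ↥J :=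
        { toFun := fun w => ⟨f w, hmemJ w⟩
          map_add' := fun a b => Subtype.ext (f.toLinearMap.map_add a b)
          map_smul' := fun c a => Subtype.ext (f.toLinearMap.map_smul c a)
          map_lie' := by
            intro a b
            exact Subtype.ext (f.map_lie a b) } with hg
      have hgsurj : Function.Surjective g := by
        rintro ⟨m, w, rfl⟩
        exact ⟨w, rfl⟩
      have hker : LieModule.lowerCentralSeries F ↥K ↥K k ≤ g.ker := by
        rw [← hk]
        intro w hw
        rw [LieHom.mem_ker]
        have hw' : (w : L) ∈ lowerNil F L (n+1) := (mem_lowerNil_succ_iff n _).mpr ⟨w, hw, rfl⟩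
        have hup : (w : L) ∈ Ni := ih (w : L) (by rw [h1]; exact hw')
        apply Subtype.ext
        show π (w : L) = 0
        exact (lieQuotMk_eq_zero_iff Ni _).mpr hup
      have hnil : LieRing.IsNilpotent ↥J := by
        refine (LieModule.isNilpotent_iff F _ _).mpr ⟨k, ?_⟩
        rw [← LieIdeal.lowerCentralSeries_map_eq k hgsurj, LieIdeal.map_eq_bot_iff]
        exact hker
      intro x hx
      rw [upperNil_succ_def]
      show π x ∈ nilrad F (L ⧸ Ni)
      have hxJ : π x ∈ J := ⟨⟨x, hx⟩, rfl⟩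
      have hJle : J ≤ nilrad F (L ⧸ Ni) := le_sSup (show J ∈ {I : LieIdeal F (L ⧸ Ni) | LieRing.IsNilpotent I} from hnil)
      exact hJle hxJ
end

section
/- Let L be a finite-dimensional solvable Lie algebra. The length of the upper nilpotent series of L equals the length of the lower nilpotent series of L; that is, if r is minimal with N_r(L)=L and s is minimal with Γ_s(L)=0, then r = s. -/
variable (F : Type*) [Field F]

section AuxProof

open LieModule

theorem aux_nilpotent_of_surj {K M : Type*} [LieRing K] [LieAlgebra F K] [LieRing M]
    [LieAlgebra F M] (f : K →ₗ⁅F⁆ M) (hf : Function.Surjective f) (c : ℕ)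
    (h : ∀ x ∈ LieModule.lowerCentralSeries F K K c, f x = 0) :
    LieRing.IsNilpotent M := by
  refine (LieModule.isNilpotent_iff F M M).mpr ⟨c, ?_⟩
  rw [← LieIdeal.lowerCentralSeries_map_eq c hf, eq_bot_iff, LieIdeal.map_le]
  rintro y ⟨x, hx, rfl⟩
  simp [h x hx]

theorem aux_nilResidual_eq (K : Type*) [LieRing K] [LieAlgebra F K] [FiniteDimensional F K] :
    ∃ c, nilResidual F K = LieModule.lowerCentralSeries F K K c := by
  obtain ⟨c, hc⟩ := (LieModule.eventually_iInf_lowerCentralSeries_eq F K K).exists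
  refine ⟨c, le_antisymm ?_ ?_⟩
  · refine sInf_le ?_
    refine aux_nilpotent_of_surj F (lieQuotMk (LieModule.lowerCentralSeries F K K c))
      (LieSubmodule.Quotient.surjective_mk' _) c fun x hx => ?_
    exact (LieSubmodule.Quotient.mk_eq_zero _).mpr hx
  · rw [← hc]
    refine le_sInf fun I hI => ?_
    have hmod : LieModule.IsNilpotent K (K ⧸ I) := by
      obtain ⟨k, hk⟩ := (LieModule.isNilpotent_iff F (K ⧸ I) (K ⧸ I)).mp hI
      exact (LieModule.isNilpotent_iff F K (K ⧸ I)).mpr ⟨k, by rw [← LieSubmodule.toSubmodule_inj,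
        coe_lowerCentralSeries_ideal_quot_eq, hk, LieSubmodule.bot_toSubmodule,
        LieSubmodule.bot_toSubmodule]⟩
    exact LieModule.iInf_lcs_le_of_isNilpotent_quot F K K I hmod

theorem aux_image_lcs_stable {L : Type*} [LieRing L] [LieAlgebra F L] (K : LieSubalgebra F L)
    (hK : ∀ (x y : L), y ∈ K → ⁅x, y⁆ ∈ K) (k : ℕ) (x y : L)
    (hy : y ∈ (LieSubmodule.toSubmodule (lowerCentralSeries F K K k)).map
      (K.incl : K →ₗ⁅F⁆ L).toLinearMap) :
    ⁅x, y⁆ ∈ (LieSubmodule.toSubmodule (lowerCentralSeries F K K k)).map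
      (K.incl : K →ₗ⁅F⁆ L).toLinearMap := by
  induction k generalizing x y with
  | zero =>
    obtain ⟨a, -, rfl⟩ := hy
    exact ⟨⟨⁅x, (a : L)⁆, hK x a a.2⟩, trivial, rfl⟩
  | succ k ih =>
    rw [lowerCentralSeries_succ, LieSubmodule.lieIdeal_oper_eq_linear_span',
      Submodule.map_span] at hy ⊢
    refine Submodule.span_induction ?_ ?_ ?_ ?_ hy
    · rintro s ⟨m, ⟨a, -, b, hb, rfl⟩, rfl⟩
      have h1 : (K.incl : K →ₗ⁅F⁆ L).toLinearMap ⁅a, b⁆ = ⁅(a : L), (b : L)⁆ := rfl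
      rw [h1, leibniz_lie]
      refine Submodule.add_mem _ ?_ ?_
      · refine Submodule.subset_span ⟨⁅(⟨⁅x, (a : L)⁆, hK x a a.2⟩ : K), b⁆,
          ⟨⟨⁅x, (a : L)⁆, hK x a a.2⟩, LieSubmodule.mem_top _, b, hb, rfl⟩, rfl⟩
      · have h2 : ⁅x, (b : L)⁆ ∈ (LieSubmodule.toSubmodule (lowerCentralSeries F K K k)).map
            (K.incl : K →ₗ⁅F⁆ L).toLinearMap := ih x (b : L) ⟨b, hb, rfl⟩
        obtain ⟨b', hb', hE⟩ := h2
        have h3 : ⁅(a : L), ⁅x, (b : L)⁆⁆ = (K.incl : K →ₗ⁅F⁆ L).toLinearMap ⁅a, b'⁆ := by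
          have : ((b' : L)) = ⁅x, (b : L)⁆ := hE
          simp only [← this]; rfl
        rw [h3]
        exact Submodule.subset_span ⟨⁅a, b'⁆, ⟨a, LieSubmodule.mem_top _, b', hb', rfl⟩, rfl⟩
    · simp
    · intro u v _ _ hu hv
      rw [lie_add]; exact Submodule.add_mem _ hu hv
    · intro t u _ hu
      rw [lie_smul]; exact Submodule.smul_mem _ t hu

theorem aux_lowerNil_stable (L : Type*) [LieRing L] [LieAlgebra F L] [FiniteDimensional F L] :
    ∀ (n : ℕ) (x y : L), y ∈ lowerNil F L n → ⁅x, y⁆ ∈ lowerNil F L n := by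
  intro n
  induction n with
  | zero => intro x y _; exact LieSubalgebra.mem_top _
  | succ n ih =>
    intro x y hy
    set K := lowerNil F L n with hKdef
    haveI : FiniteDimensional F K := inferInstanceAs (FiniteDimensional F K.toSubmodule)
    obtain ⟨c, hc⟩ := aux_nilResidual_eq F K
    have hmem : ∀ z : L, z ∈ lowerNil F L (n+1) ↔
        z ∈ (LieSubmodule.toSubmodule (lowerCentralSeries F K K c)).map
          (K.incl : K →ₗ⁅F⁆ L).toLinearMap := by
      intro z
      show z ∈ LieSubalgebra.map K.incl (LieIdeal.toLieSubalgebra F K (nilResidual F K)) ↔ _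
      rw [LieSubalgebra.mem_map]
      constructor
      · rintro ⟨w, hw, rfl⟩
        refine ⟨w, ?_, rfl⟩
        have hw' : w ∈ nilResidual F K := hw
        rwa [hc] at hw'
      · rintro ⟨w, hw, rfl⟩
        refine ⟨w, ?_, rfl⟩
        show w ∈ nilResidual F K
        rw [hc]; exact hw
    rw [hmem] at hy ⊢
    exact aux_image_lcs_stable F K ih c x y hy

theorem aux_ideal_lcs_le (Q : Type*) [LieRing Q] [LieAlgebra F Q] (I : LieIdeal F Q) (k : ℕ) :
    LieSubmodule.toSubmodule (I.lcs Q (k+1)) ≤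
      (LieSubmodule.toSubmodule (lowerCentralSeries F I I k)).map I.toSubmodule.subtype := by
  induction k with
  | zero =>
    rw [LieIdeal.lcs_succ, LieIdeal.lcs_zero, LieSubmodule.lieIdeal_oper_eq_linear_span']
    refine Submodule.span_le.mpr ?_
    rintro m ⟨a, ha, b, -, rfl⟩
    refine ⟨⟨⁅a, b⁆, ?_⟩, trivial, rfl⟩
    have hmem : ⁅b, a⁆ ∈ I := I.lie_mem ha
    rw [← lie_skew]
    exact neg_mem hmem
  | succ k ih =>
    rw [LieIdeal.lcs_succ, LieSubmodule.lieIdeal_oper_eq_linear_span']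
    refine Submodule.span_le.mpr ?_
    rintro m ⟨a, ha, b, hb, rfl⟩
    obtain ⟨b', hb', rfl⟩ := ih hb
    refine ⟨⁅(⟨a, ha⟩ : I), b'⁆, ?_, rfl⟩
    show ⁅(⟨a, ha⟩ : I), b'⁆ ∈ lowerCentralSeries F I I (k+1)
    rw [LieModule.lowerCentralSeries_succ]
    exact LieSubmodule.lie_mem_lie (LieSubmodule.mem_top _) hb'

theorem aux_map_le_lcs (Q : Type*) [LieRing Q] [LieAlgebra F Q] (I : LieIdeal F Q) (k : ℕ) :
    (LieSubmodule.toSubmodule (lowerCentralSeries F I I k)).map I.toSubmodule.subtype ≤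
      LieSubmodule.toSubmodule (I.lcs Q k) := by
  induction k with
  | zero =>
    rw [lowerCentralSeries_zero, LieIdeal.lcs_zero]
    rintro m ⟨a, -, rfl⟩
    exact LieSubmodule.mem_top _
  | succ k ih =>
    rw [lowerCentralSeries_succ, LieSubmodule.lieIdeal_oper_eq_linear_span',
      Submodule.map_span, LieIdeal.lcs_succ]
    refine Submodule.span_le.mpr ?_
    rintro m ⟨w, ⟨a, -, b, hb, rfl⟩, rfl⟩
    have hbQ : (b : Q) ∈ I.lcs Q k := ih ⟨b, hb, rfl⟩
    show ⁅(a : Q), (b : Q)⁆ ∈ ⁅I, I.lcs Q k⁆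
    exact LieSubmodule.lie_mem_lie a.2 hbQ

theorem aux_nilpotent_of_lcs_bot (Q : Type*) [LieRing Q] [LieAlgebra F Q] (I : LieIdeal F Q)
    (h : ∃ k, I.lcs Q k = ⊥) : LieRing.IsNilpotent I := by
  obtain ⟨k, hk⟩ := h
  refine (LieModule.isNilpotent_iff F I I).mpr ⟨k, ?_⟩
  have h1 := aux_map_le_lcs F Q I k
  rw [hk, LieSubmodule.bot_toSubmodule] at h1
  rw [eq_bot_iff]
  intro m hm
  have : I.toSubmodule.subtype m ∈ (⊥ : Submodule F Q) := h1 ⟨m, hm, rfl⟩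
  simp only [Submodule.mem_bot] at this
  have hm0 : m = 0 := Subtype.ext this
  simp [hm0]

theorem aux_lcs_bot_of_nilpotent (Q : Type*) [LieRing Q] [LieAlgebra F Q] (I : LieIdeal F Q)
    (h : LieRing.IsNilpotent I) : ∃ k, I.lcs Q k = ⊥ := by
  obtain ⟨k, hk⟩ := (LieModule.isNilpotent_iff F I I).mp h
  refine ⟨k + 1, ?_⟩
  have h1 := aux_ideal_lcs_le F Q I k
  rw [hk, LieSubmodule.bot_toSubmodule, Submodule.map_bot] at h1
  rw [eq_bot_iff, ← LieSubmodule.toSubmodule_le_toSubmodule, LieSubmodule.bot_toSubmodule]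
  exact h1

theorem aux_lcs_sup (Q : Type*) [LieRing Q] [LieAlgebra F Q] (I J : LieIdeal F Q) :
    ∀ (n a b : ℕ), n = a + b → (I ⊔ J).lcs Q n ≤ I.lcs Q a ⊔ J.lcs Q b := by
  intro n
  induction n with
  | zero =>
    intro a b h
    obtain ⟨rfl, rfl⟩ : a = 0 ∧ b = 0 := by omega
    simp
  | succ n ih =>
    intro a b h
    rcases Nat.eq_zero_or_pos a with rfl | ha
    · refine le_trans le_top (le_trans ?_ le_sup_left)
      rw [LieIdeal.lcs_zero]
    rcases Nat.eq_zero_or_pos b with rfl | hb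
    · refine le_trans le_top (le_trans ?_ le_sup_right)
      rw [LieIdeal.lcs_zero]
    obtain ⟨a', rfl⟩ : ∃ a', a = a' + 1 := ⟨a - 1, by omega⟩
    obtain ⟨b', rfl⟩ : ∃ b', b = b' + 1 := ⟨b - 1, by omega⟩
    rw [LieIdeal.lcs_succ, LieSubmodule.sup_lie]
    refine sup_le ?_ ?_
    · calc ⁅I, (I ⊔ J).lcs Q n⁆ ≤ ⁅I, I.lcs Q a' ⊔ J.lcs Q (b'+1)⁆ :=
            LieSubmodule.mono_lie le_rfl (ih a' (b'+1) (by omega))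
        _ = ⁅I, I.lcs Q a'⁆ ⊔ ⁅I, J.lcs Q (b'+1)⁆ := LieSubmodule.lie_sup _ _ _
        _ ≤ I.lcs Q (a'+1) ⊔ J.lcs Q (b'+1) := by
            refine sup_le_sup ?_ (LieSubmodule.lie_le_right _ _)
            rw [LieIdeal.lcs_succ]
    · calc ⁅J, (I ⊔ J).lcs Q n⁆ ≤ ⁅J, I.lcs Q (a'+1) ⊔ J.lcs Q b'⁆ :=
            LieSubmodule.mono_lie le_rfl (ih (a'+1) b' (by omega))
        _ = ⁅J, I.lcs Q (a'+1)⁆ ⊔ ⁅J, J.lcs Q b'⁆ := LieSubmodule.lie_sup _ _ _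
        _ ≤ I.lcs Q (a'+1) ⊔ J.lcs Q (b'+1) := by
            refine sup_le_sup (LieSubmodule.lie_le_right _ _) ?_
            rw [LieIdeal.lcs_succ]

theorem aux_nilrad_nilpotent (Q : Type*) [LieRing Q] [LieAlgebra F Q] [FiniteDimensional F Q] :
    LieRing.IsNilpotent (nilrad F Q) := by
  have key : {I : LieIdeal F Q | LieRing.IsNilpotent I} =
      {I : LieIdeal F Q | ∃ k, I.lcs Q k = ⊥} := by
    ext I
    exact ⟨fun h => aux_lcs_bot_of_nilpotent F Q I h, fun h => aux_nilpotent_of_lcs_bot F Q I h⟩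
  have h2 : SupClosed {I : LieIdeal F Q | ∃ k, I.lcs Q k = ⊥} := by
    rintro I ⟨a, ha⟩ J ⟨b, hb⟩
    refine ⟨a + b, le_bot_iff.mp ?_⟩
    refine le_trans (aux_lcs_sup F Q I J (a+b) a b rfl) ?_
    rw [ha, hb, sup_idem]
  have hbot : (⊥ : LieIdeal F Q) ∈ {I : LieIdeal F Q | ∃ k, I.lcs Q k = ⊥} := by
    refine ⟨1, ?_⟩
    rw [LieIdeal.lcs_succ]
    simp
  have h3 := CompleteLattice.IsSupFiniteCompact.isSupClosedCompact (LieIdeal F Q)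
    (CompleteLattice.WellFoundedGT.isSupFiniteCompact (LieIdeal F Q))
    {I : LieIdeal F Q | ∃ k, I.lcs Q k = ⊥} ⟨⊥, hbot⟩ h2
  have h4 : ∃ k, (nilrad F Q).lcs Q k = ⊥ := by
    rw [nilrad, key]; exact h3
  exact aux_nilpotent_of_lcs_bot F Q _ h4

theorem aux_stepA {L : Type*} [LieRing L] [LieAlgebra F L] [FiniteDimensional F L] {n j : ℕ}
    (h : (lowerNil F L n : Set L) ⊆ (upperNil F L (j+1) : Set L)) :
    (lowerNil F L (n+1) : Set L) ⊆ (upperNil F L j : Set L) := by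
  set K := lowerNil F L n with hK
  set N := upperNil F L j with hN
  haveI : FiniteDimensional F K := inferInstanceAs (FiniteDimensional F K.toSubmodule)
  let g : K →ₗ⁅F⁆ L ⧸ N := (lieQuotMk N).comp K.incl
  have hrange : ∀ x : K, g x ∈ nilrad F (L ⧸ N) := by
    intro x
    have hx : (x : L) ∈ upperNil F L (j+1) := h x.2
    rw [show upperNil F L (j+1) = LieIdeal.comap (lieQuotMk N) (nilrad F (L ⧸ N)) from rfl,
      LieIdeal.mem_comap] at hx
    exact hx
  haveI hnil : LieRing.IsNilpotent (nilrad F (L ⧸ N)) := aux_nilrad_nilpotent F _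
  have hrangeNil : LieRing.IsNilpotent g.range := by
    let φ : (g.range : LieSubalgebra F (L ⧸ N)) →ₗ⁅F⁆ nilrad F (L ⧸ N) :=
      { toFun := fun x => ⟨(x : L ⧸ N), by obtain ⟨y, hy⟩ := x.2; exact hy ▸ hrange y⟩
        map_add' := fun x y => rfl
        map_smul' := fun t x => rfl
        map_lie' := rfl }
    have hinj : Function.Injective φ := by
      intro a b hab
      apply Subtype.ext
      exact congrArg (fun z : (nilrad F (L ⧸ N) : LieIdeal F (L ⧸ N)) => z.val) hab
    exact hinj.lieAlgebra_isNilpotent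
  have hqnil : LieRing.IsNilpotent (K ⧸ g.ker) :=
    g.quotKerEquivRange.nilpotent_iff_equiv_nilpotent.mpr hrangeNil
  have hle : nilResidual F K ≤ g.ker := sInf_le hqnil
  intro y hy
  have hy' : y ∈ LieSubalgebra.map K.incl (LieIdeal.toLieSubalgebra F K (nilResidual F K)) := hy
  rw [LieSubalgebra.mem_map] at hy'
  obtain ⟨z, hz, rfl⟩ := hy'
  have hz' : z ∈ nilResidual F K := hz
  have h0 : g z = 0 := hle hz'
  exact (LieSubmodule.Quotient.mk_eq_zero N).mp h0

theorem aux_stepB {L : Type*} [LieRing L] [LieAlgebra F L] [FiniteDimensional F L] {m i : ℕ}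
    (h : (lowerNil F L (m+1) : Set L) ⊆ (upperNil F L i : Set L)) :
    (lowerNil F L m : Set L) ⊆ (upperNil F L (i+1) : Set L) := by
  set K := lowerNil F L m with hK
  set N := upperNil F L i with hN
  haveI : FiniteDimensional F K := inferInstanceAs (FiniteDimensional F K.toSubmodule)
  obtain ⟨c, hc⟩ := aux_nilResidual_eq F K
  let J : LieIdeal F (L ⧸ N) :=
    { K.toSubmodule.map ((lieQuotMk N) : L →ₗ[F] L ⧸ N) with
      lie_mem := by
        rintro x q hq
        obtain ⟨b, hb, rfl⟩ := hq
        obtain ⟨a, rfl⟩ := LieSubmodule.Quotient.surjective_mk' N x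
        exact ⟨⁅a, b⁆, aux_lowerNil_stable F L m a b hb, rfl⟩ }
  have hJnil : LieRing.IsNilpotent J := by
    let f : K →ₗ⁅F⁆ J :=
      { toFun := fun x => ⟨(lieQuotMk N) (x : L), ⟨(x : L), x.2, rfl⟩⟩
        map_add' := fun x y => rfl
        map_smul' := fun t x => rfl
        map_lie' := rfl }
    have hsurj : Function.Surjective f := by
      rintro ⟨q, hq⟩
      obtain ⟨b, hb, rfl⟩ := hq
      exact ⟨⟨b, hb⟩, rfl⟩
    refine aux_nilpotent_of_surj F f hsurj c fun x hx => ?_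
    have hx' : x ∈ nilResidual F K := by rw [hc]; exact hx
    have hxL : (x : L) ∈ lowerNil F L (m+1) :=
      (LieSubalgebra.mem_map _ _ _).mpr ⟨x, hx', rfl⟩
    have hxN : (x : L) ∈ N := h hxL
    exact Subtype.ext ((LieSubmodule.Quotient.mk_eq_zero N).mpr hxN)
  have hJle : J ≤ nilrad F (L ⧸ N) := le_sSup hJnil
  intro y hy
  rw [show upperNil F L (i+1) = LieIdeal.comap (lieQuotMk N) (nilrad F (L ⧸ N)) from rfl]
  show y ∈ LieIdeal.comap (lieQuotMk N) (nilrad F (L ⧸ N))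
  rw [LieIdeal.mem_comap]
  exact hJle ⟨y, hy, rfl⟩

end AuxProof

/-- The upper and lower nilpotent series of a finite-dimensional solvable Lie algebra
have the same length. -/
theorem stmt1 {F L : Type*} [Field F] [LieRing L] [LieAlgebra F L]
    [FiniteDimensional F L] [LieAlgebra.IsSolvable L] (r s : ℕ)
    (hr : upperNil F L r = ⊤) (hrmin : ∀ m < r, upperNil F L m ≠ ⊤)
    (hs : lowerNil F L s = ⊥) (hsmin : ∀ m < s, lowerNil F L m ≠ ⊥) :
    r = s := by
  have hA : ∀ n, n ≤ r → (lowerNil F L n : Set L) ⊆ (upperNil F L (r - n) : Set L) := by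
    intro n
    induction n with
    | zero =>
      intro _
      rw [Nat.sub_zero, hr]
      intro x _
      exact LieSubmodule.mem_top x
    | succ n ih =>
      intro hn
      have h1 := ih (by omega)
      have heq : r - n = (r - (n+1)) + 1 := by omega
      rw [heq] at h1
      exact aux_stepA F h1
  have hGr : lowerNil F L r = ⊥ := by
    have h1 := hA r le_rfl
    rw [Nat.sub_self] at h1
    rw [eq_bot_iff]
    intro x hx
    have : x ∈ (upperNil F L 0 : Set L) := h1 hx
    have hx0 : x = 0 := by
      rw [show upperNil F L 0 = (⊥ : LieIdeal F L) from rfl] at this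
      exact (LieSubmodule.mem_bot x).mp this
    exact (LieSubalgebra.mem_bot x).mpr hx0
  have hsr : s ≤ r := by
    by_contra hcon
    exact hsmin r (by omega) hGr
  have hB : ∀ i, i ≤ s → (lowerNil F L (s - i) : Set L) ⊆ (upperNil F L i : Set L) := by
    intro i
    induction i with
    | zero =>
      intro _
      rw [Nat.sub_zero, hs]
      intro x hx
      have hx0 : x = 0 := hx
      rw [hx0]
      exact (upperNil F L 0).zero_mem
    | succ i ih =>
      intro hi
      have h1 := ih (by omega)
      have heq : s - i = (s - (i+1)) + 1 := by omega
      rw [heq] at h1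
      exact aux_stepB F h1
  have hNs : upperNil F L s = ⊤ := by
    have h1 := hB s le_rfl
    rw [Nat.sub_self] at h1
    rw [eq_top_iff]
    intro x _
    exact h1 (LieSubalgebra.mem_top x)
  have hrs : r ≤ s := by
    by_contra hcon
    exact hrmin s (by omega) hNs
  omega
end

section
/- Let L be a finite-dimensional solvable Lie algebra over a field of characteristic p > 2 with φ(L) = 0 (Frattini-free). Then the nilradical N(L) is a characteristic ideal of L, i.e., D(N(L)) ⊆ N(L) for every derivation D of L. -/
variable (F : Type*) [Field F]

section Aux

open LieModule

variable {L : Type*} [LieRing L] [LieAlgebra F L]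

/-- Iterated ideal bracket series: `idlcs P 0 = P`, `idlcs P (k+1) = ⁅P, idlcs P k⁆`. -/
noncomputable def idlcs (P : LieIdeal F L) : ℕ → LieIdeal F L
  | 0 => P
  | k + 1 => ⁅P, idlcs P k⁆

lemma idlcs_succ (P : LieIdeal F L) (k : ℕ) : idlcs F P (k + 1) = ⁅P, idlcs F P k⁆ := rfl

lemma idlcs_le_self (P : LieIdeal F L) : ∀ k, idlcs F P k ≤ P
  | 0 => le_rfl
  | k + 1 => LieSubmodule.lie_le_left _ _

/-- If the ideal `P` is nilpotent as a Lie algebra then the series `idlcs` vanishes. -/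
lemma exists_idlcs_eq_bot (P : LieIdeal F L) (hP : LieRing.IsNilpotent P) :
    ∃ k, idlcs F P k = ⊥ := by
  obtain ⟨k, hk⟩ := (LieModule.isNilpotent_iff F P P).mp hP
  refine ⟨k + 1, ?_⟩
  let S : ℕ → Submodule F L := fun n =>
    { carrier := {x | ∃ m : P, m ∈ lowerCentralSeries F P P n ∧ (m : L) = x}
      add_mem' := by rintro a b ⟨m, hm, rfl⟩ ⟨m', hm', rfl⟩
                     exact ⟨m + m', add_mem hm hm', rfl⟩
      zero_mem' := ⟨0, zero_mem _, rfl⟩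
      smul_mem' := by rintro c a ⟨m, hm, rfl⟩; exact ⟨c • m, Submodule.smul_mem _ c hm, rfl⟩ }
  have key : ∀ n, (idlcs F P (n + 1)).toSubmodule ≤ S n := by
    intro n
    induction n with
    | zero =>
      rw [idlcs_succ, LieSubmodule.lieIdeal_oper_eq_linear_span']
      refine Submodule.span_le.2 ?_
      rintro x ⟨a, ha, b, hb, rfl⟩
      have hb' : b ∈ P := hb
      exact ⟨⟨⁅a, b⁆, P.lie_mem hb'⟩, LieSubmodule.mem_top _, rfl⟩
    | succ n ih =>
      rw [idlcs_succ, LieSubmodule.lieIdeal_oper_eq_linear_span']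
      refine Submodule.span_le.2 ?_
      rintro x ⟨a, ha, b, hb, rfl⟩
      obtain ⟨m, hm, rfl⟩ := ih hb
      refine ⟨⁅(⟨a, ha⟩ : P), m⁆, ?_, ?_⟩
      · rw [LieModule.lowerCentralSeries_succ]
        exact LieSubmodule.lie_mem_lie (LieSubmodule.mem_top _) hm
      · rfl
  rw [eq_bot_iff]
  intro x hx
  obtain ⟨m, hm, rfl⟩ := key k hx
  rw [hk] at hm
  rw [LieSubmodule.mem_bot] at hm ⊢
  simp [hm]

/-- If the series `idlcs` vanishes then the ideal `P` is nilpotent as a Lie algebra. -/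
lemma isNilpotent_of_idlcs (P : LieIdeal F L) (k : ℕ) (h : idlcs F P k = ⊥) :
    LieRing.IsNilpotent P := by
  let T : ℕ → LieSubmodule F P P := fun n =>
    { carrier := {m : P | (m : L) ∈ idlcs F P n}
      add_mem' := fun {a b} ha hb => by
        show ((a + b : P) : L) ∈ idlcs F P n
        rw [LieSubmodule.coe_add]
        exact add_mem ha hb
      zero_mem' := by
        show ((0 : P) : L) ∈ idlcs F P n
        rw [LieSubmodule.coe_zero]
        exact zero_mem _
      smul_mem' := fun c a ha => by
        show ((c • a : P) : L) ∈ idlcs F P n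
        rw [LieSubmodule.coe_smul]
        exact Submodule.smul_mem _ c ha
      lie_mem := fun {x m} hm => by
        show ((⁅x, m⁆ : P) : L) ∈ idlcs F P n
        exact (idlcs F P n).lie_mem hm }
  have key : ∀ n, lowerCentralSeries F P P n ≤ T n := by
    intro n
    induction n with
    | zero => intro m _; exact m.2
    | succ n ih =>
      rw [LieModule.lowerCentralSeries_succ, LieSubmodule.lie_le_iff]
      intro x _ m hm
      show ((⁅x, m⁆ : P) : L) ∈ idlcs F P (n + 1)
      rw [idlcs_succ]
      exact LieSubmodule.lie_mem_lie x.2 (ih hm)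
  refine (LieModule.isNilpotent_iff F P P).mpr ?_
  refine ⟨k, ?_⟩
  rw [eq_bot_iff]
  intro m hm
  have h2 : (m : L) ∈ idlcs F P k := key k hm
  rw [h, LieSubmodule.mem_bot] at h2
  rw [LieSubmodule.mem_bot]
  exact Subtype.ext h2

/-- The derived ideal of a nilpotent ideal lies in every maximal subalgebra. -/
lemma derived_le_max (M : LieSubalgebra F L) (hM : IsMaxSub F M) (P : LieIdeal F L)
    (hP : LieRing.IsNilpotent P) {x y : L} (hx : x ∈ P) (hy : y ∈ P) : ⁅x, y⁆ ∈ M := by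
  by_cases hPM : ∀ z ∈ (⁅P, P⁆ : LieIdeal F L), z ∈ M
  · exact hPM _ (LieSubmodule.lie_mem_lie hx hy)
  exfalso
  push_neg at hPM
  obtain ⟨z₀, hz₀, hz₀M⟩ := hPM
  have hWP : (⁅P, P⁆ : LieIdeal F L) ≤ P := LieSubmodule.lie_le_left _ _
  let Q : LieSubalgebra F L :=
    { toSubmodule := M.toSubmodule ⊔ (⁅P, P⁆ : LieIdeal F L).toSubmodule
      lie_mem' := by
        intro a b ha hb
        obtain ⟨m, hm, w, hw, rfl⟩ := Submodule.mem_sup.1 ha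
        obtain ⟨m', hm', w', hw', rfl⟩ := Submodule.mem_sup.1 hb
        have hwW : w ∈ (⁅P, P⁆ : LieIdeal F L) := hw
        have hwW' : w' ∈ (⁅P, P⁆ : LieIdeal F L) := hw'
        have h1 : ⁅m, m'⁆ ∈ M.toSubmodule := M.lie_mem hm hm'
        have h2 : ⁅m, w'⁆ ∈ (⁅P, P⁆ : LieIdeal F L) := (⁅P, P⁆ : LieIdeal F L).lie_mem hwW'
        have h3 : ⁅w, m'⁆ ∈ (⁅P, P⁆ : LieIdeal F L) := by
          rw [← lie_skew]
          exact neg_mem ((⁅P, P⁆ : LieIdeal F L).lie_mem hwW)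
        have h4 : ⁅w, w'⁆ ∈ (⁅P, P⁆ : LieIdeal F L) := (⁅P, P⁆ : LieIdeal F L).lie_mem hwW'
        show ⁅m + w, m' + w'⁆ ∈ M.toSubmodule ⊔ (⁅P, P⁆ : LieIdeal F L).toSubmodule
        simp only [lie_add, add_lie]
        exact add_mem
          (add_mem (Submodule.mem_sup_left h1) (Submodule.mem_sup_right h3))
          (add_mem (Submodule.mem_sup_right h2) (Submodule.mem_sup_right h4)) }
  have hMQ : M ≤ Q := fun a ha => Submodule.mem_sup_left ha
  have hMneQ : M ≠ Q := by
    intro hEq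
    exact hz₀M (by rw [hEq]; exact Submodule.mem_sup_right hz₀)
  have hQtop : Q = ⊤ := hM.2 Q (lt_of_le_of_ne hMQ hMneQ)
  have htop : ∀ z : L, z ∈ M.toSubmodule ⊔ (⁅P, P⁆ : LieIdeal F L).toSubmodule := by
    intro z
    have hz : z ∈ Q := by rw [hQtop]; exact LieSubalgebra.mem_top z
    exact hz
  set K : Submodule F L := P.toSubmodule ⊓ M.toSubmodule with hK
  have base : P.toSubmodule ≤ (idlcs F P 1).toSubmodule ⊔ K := by
    intro a ha
    obtain ⟨m, hm, w, hw, rfl⟩ := Submodule.mem_sup.1 (htop a)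
    have hwP : w ∈ P := hWP hw
    have hmP : m ∈ P := by
      have he : m = m + w - w := by abel
      rw [he]
      exact sub_mem ha hwP
    have h1 : w ∈ (idlcs F P 1).toSubmodule := hw
    have h2 : m ∈ K := ⟨hmP, hm⟩
    rw [add_comm]
    exact Submodule.add_mem _ (Submodule.mem_sup_left h1) (Submodule.mem_sup_right h2)
  have hKlie : ∀ {a b : L}, a ∈ K → b ∈ K → ⁅a, b⁆ ∈ K := by
    intro a b ha hb
    exact ⟨P.lie_mem hb.1, M.lie_mem ha.2 hb.2⟩
  have G : ∀ j, P.toSubmodule ≤ (idlcs F P (j + 1)).toSubmodule ⊔ K := by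
    intro j
    induction j with
    | zero => exact base
    | succ j ih =>
      have W' : (idlcs F P 1).toSubmodule ≤ (idlcs F P (j + 2)).toSubmodule ⊔ K := by
        rw [idlcs_succ, LieSubmodule.lieIdeal_oper_eq_linear_span']
        refine Submodule.span_le.2 ?_
        rintro x ⟨a, ha, b, hb, rfl⟩
        have hb' : b ∈ P := hb
        obtain ⟨u, hu, κ, hκ, rfl⟩ := Submodule.mem_sup.1 (ih ha)
        obtain ⟨v, hv, κ', hκ', rfl⟩ := Submodule.mem_sup.1 (ih hb')
        have huI : u ∈ idlcs F P (j + 1) := hu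
        have hvI : v ∈ idlcs F P (j + 1) := hv
        have huP : u ∈ P := idlcs_le_self F P (j + 1) huI
        have t1 : ⁅u, v⁆ ∈ idlcs F P (j + 2) := by
          rw [idlcs_succ]
          exact LieSubmodule.lie_mem_lie huP hvI
        have t2 : ⁅u, κ'⁆ ∈ idlcs F P (j + 2) := by
          rw [← lie_skew, idlcs_succ]
          exact neg_mem (LieSubmodule.lie_mem_lie hκ'.1 huI)
        have t3 : ⁅κ, v⁆ ∈ idlcs F P (j + 2) := by
          rw [idlcs_succ]
          exact LieSubmodule.lie_mem_lie hκ.1 hvI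
        have t4 : ⁅κ, κ'⁆ ∈ K := hKlie hκ hκ'
        show ⁅u + κ, v + κ'⁆ ∈ (idlcs F P (j + 2)).toSubmodule ⊔ K
        simp only [lie_add, add_lie]
        exact add_mem
          (add_mem (Submodule.mem_sup_left t1) (Submodule.mem_sup_left t3))
          (add_mem (Submodule.mem_sup_left t2) (Submodule.mem_sup_right t4))
      exact le_trans base (sup_le (le_trans W' le_rfl) le_sup_right)
  obtain ⟨k, hk⟩ := exists_idlcs_eq_bot F P hP
  have hk' : idlcs F P (k + 1) = ⊥ := by
    rw [idlcs_succ, hk]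
    exact le_bot_iff.1 (LieSubmodule.lie_le_right _ _)
  have hPM' : P.toSubmodule ≤ M.toSubmodule := by
    have hG := G k
    rw [hk', LieSubmodule.bot_toSubmodule, bot_sup_eq] at hG
    exact le_trans hG inf_le_right
  exact hz₀M (hPM' (hWP hz₀))

/-- Every nilpotent ideal of a `φ`-free Lie algebra is abelian. -/
lemma nilp_ideal_abelian (hphi : lieFrattini F L = ⊥) (P : LieIdeal F L)
    (hP : LieRing.IsNilpotent P) {x y : L} (hx : x ∈ P) (hy : y ∈ P) : ⁅x, y⁆ = 0 := by
  have hmem : ⁅x, y⁆ ∈ lieFrattini F L := by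
    show ⁅x, y⁆ ∈ ((sInf {M : LieSubalgebra F L | IsMaxSub F M} : LieSubalgebra F L) : Set L)
    rw [LieSubalgebra.coe_sInf]
    exact Set.mem_iInter₂.2 fun M hM => derived_le_max F M hM P hP hx hy
  rw [hphi] at hmem
  exact (LieSubalgebra.mem_bot _).1 hmem

/-- In a `φ`-free Lie algebra, the nilradical is abelian. -/
lemma nilrad_abelian (hphi : lieFrattini F L = ⊥) {x y : L}
    (hx : x ∈ nilrad F L) (hy : y ∈ nilrad F L) : ⁅x, y⁆ = 0 := by
  set S : Set (LieIdeal F L) := {I : LieIdeal F L | LieRing.IsNilpotent I} with hS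
  have pairwise : ∀ I ∈ S, ∀ J ∈ S, ∀ a ∈ I, ∀ b ∈ J, ⁅a, b⁆ = (0 : L) := by
    intro I hI J hJ a ha b hb
    set P : LieIdeal F L := I ⊔ J with hPdef
    have habI : ∀ {u v : L}, u ∈ I → v ∈ I → ⁅u, v⁆ = (0 : L) :=
      fun hu hv => nilp_ideal_abelian F hphi I hI hu hv
    have habJ : ∀ {u v : L}, u ∈ J → v ∈ J → ⁅u, v⁆ = (0 : L) :=
      fun hu hv => nilp_ideal_abelian F hphi J hJ hu hv
    have h2 : (⁅P, P⁆ : LieIdeal F L) ≤ I ⊓ J := by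
      rw [LieSubmodule.lie_le_iff]
      intro u hu v hv
      obtain ⟨u₁, hu₁, u₂, hu₂, rfl⟩ := (LieSubmodule.mem_sup _ _ _).1 hu
      obtain ⟨v₁, hv₁, v₂, hv₂, rfl⟩ := (LieSubmodule.mem_sup _ _ _).1 hv
      have m1 : ⁅u₁, v₂⁆ ∈ I ⊓ J := by
        refine ⟨?_, J.lie_mem hv₂⟩
        rw [← lie_skew]; exact neg_mem (I.lie_mem hu₁)
      have m2 : ⁅u₂, v₁⁆ ∈ I ⊓ J := by
        refine ⟨I.lie_mem hv₁, ?_⟩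
        rw [← lie_skew]; exact neg_mem (J.lie_mem hu₂)
      show ⁅u₁ + u₂, v₁ + v₂⁆ ∈ I ⊓ J
      simp only [lie_add, add_lie]
      rw [habI hu₁ hv₁, habJ hu₂ hv₂, zero_add, add_zero]
      exact add_mem m2 m1
    have h3 : (⁅P, I ⊓ J⁆ : LieIdeal F L) ≤ ⊥ := by
      rw [LieSubmodule.lie_le_iff]
      intro u hu c hc
      obtain ⟨u₁, hu₁, u₂, hu₂, rfl⟩ := (LieSubmodule.mem_sup _ _ _).1 hu
      rw [LieSubmodule.mem_bot, add_lie, habI hu₁ hc.1, habJ hu₂ hc.2, add_zero]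
    have hidl : idlcs F P 2 = ⊥ := by
      refine le_bot_iff.1 ?_
      rw [idlcs_succ]
      exact le_trans (LieSubmodule.mono_lie_right _ h2) h3
    have hPnil : LieRing.IsNilpotent P := isNilpotent_of_idlcs F P 2 hidl
    exact nilp_ideal_abelian F hphi P hPnil
      ((le_sup_left : I ≤ P) ha) ((le_sup_right : J ≤ P) hb)
  have hN : (nilrad F L).toSubmodule = sSup {(↑s : Submodule F L) | s ∈ S} :=
    LieSubmodule.sSup_toSubmodule S
  let Q2 : L → Submodule F L := fun a =>
    { carrier := {z | ⁅a, z⁆ = 0}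
      add_mem' := fun {u v} hu hv => by
        show ⁅a, u + v⁆ = 0
        rw [lie_add, hu, hv, add_zero]
      zero_mem' := by show ⁅a, (0 : L)⁆ = 0; rw [lie_zero]
      smul_mem' := fun c z hz => by
        show ⁅a, c • z⁆ = 0
        rw [lie_smul, hz, smul_zero] }
  let Q1 : Submodule F L :=
    { carrier := {z | ∀ b ∈ nilrad F L, ⁅z, b⁆ = 0}
      add_mem' := fun {u v} hu hv => by
        intro b hb; rw [add_lie, hu b hb, hv b hb, add_zero]
      zero_mem' := fun b hb => by rw [zero_lie]
      smul_mem' := fun c z hz => by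
        intro b hb; rw [smul_lie, hz b hb, smul_zero] }
  have main : (nilrad F L).toSubmodule ≤ Q1 := by
    rw [hN]
    refine sSup_le ?_
    rintro _ ⟨I, hI, rfl⟩
    intro a ha b hb
    have inner : (nilrad F L).toSubmodule ≤ Q2 a := by
      rw [hN]
      refine sSup_le ?_
      rintro _ ⟨J, hJ, rfl⟩
      intro v hv
      have h0 : ⁅a, v⁆ = -⁅v, a⁆ := by rw [lie_skew]
      show ⁅a, v⁆ = 0
      rw [h0, pairwise J hJ I hI v hv a ha, neg_zero]
    exact inner hb
  exact main hx y hy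

end Aux

/-- Char `p > 2`, `L` solvable and `φ`-free: the nilradical is a characteristic ideal. -/
theorem stmt8 {F L : Type*} [Field F] [LieRing L] [LieAlgebra F L]
    [FiniteDimensional F L] [LieAlgebra.IsSolvable L] (p : ℕ) [CharP F p] (hp : 2 < p)
    (hphi : lieFrattini F L = ⊥) (D : LieDerivation F L L) :
    ∀ x ∈ nilrad F L, D x ∈ nilrad F L := by
  classical
  set N : LieIdeal F L := nilrad F L with hNdef
  have hab : ∀ {a b : L}, a ∈ N → b ∈ N → ⁅a, b⁆ = 0 :=
    fun ha hb => nilrad_abelian F hphi ha hb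
  have h2F : (2 : F) ≠ 0 := by
    intro h
    have hdvd : p ∣ 2 := (CharP.cast_eq_zero_iff F p 2).1 h
    have := Nat.le_of_dvd (by norm_num) hdvd
    omega
  -- basic membership helpers
  have hmemN : ∀ {a : L}, a ∈ N → ∀ w : L, ⁅a, w⁆ ∈ N := by
    intro a ha w
    rw [← lie_skew]
    exact neg_mem (N.lie_mem ha)
  -- L1 : skew-symmetry through D
  have hsym : ∀ {a b : L}, a ∈ N → b ∈ N → ⁅D a, b⁆ = -⁅a, D b⁆ := by
    intro a b ha hb
    have h := D.apply_lie_eq_add a b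
    rw [hab ha hb, map_zero] at h
    have h' : ⁅D a, b⁆ + ⁅a, D b⁆ = 0 := by rw [add_comm]; exact h.symm
    exact eq_neg_of_add_eq_zero_left h'
  have hBsym : ∀ {a b : L}, a ∈ N → b ∈ N → ⁅a, D b⁆ = ⁅b, D a⁆ := by
    intro a b ha hb
    have h1 : ⁅a, D b⁆ = -⁅D a, b⁆ := by rw [hsym ha hb, neg_neg]
    rw [h1, ← lie_skew, neg_neg]
  -- L2 : invariance identity
  have hL2 : ∀ (w : L) {a b : L}, a ∈ N → b ∈ N →
      ⁅w, ⁅a, D b⁆⁆ = ⁅⁅w, a⁆, D b⁆ + ⁅a, D ⁅w, b⁆⁆ := by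
    intro w a b ha hb
    rw [leibniz_lie w a (D b)]
    congr 1
    have hDb : ⁅w, D b⁆ = D ⁅w, b⁆ - ⁅D w, b⁆ := by
      have h := D.apply_lie_eq_add w b
      rw [h]; abel
    rw [hDb, lie_sub]
    have hz : ⁅a, ⁅D w, b⁆⁆ = 0 := by
      rw [leibniz_lie a (D w) b, hab (hmemN ha (D w)) hb, hab ha hb, lie_zero, add_zero]
    rw [hz, sub_zero]
  set s : Set L := {v | ∃ a ∈ N, ∃ b ∈ N, ⁅a, D b⁆ = v} with hs
  set Z : Submodule F L := Submodule.span F s with hZdef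
  have hsZ : ∀ {a b : L}, a ∈ N → b ∈ N → ⁅a, D b⁆ ∈ Z := by
    intro a b ha hb
    exact Submodule.subset_span ⟨a, ha, b, hb, rfl⟩
  have hZsubN : Z ≤ N.toSubmodule := by
    rw [hZdef]
    refine Submodule.span_le.2 ?_
    rintro v ⟨a, ha, b, hb, rfl⟩
    exact hmemN ha (D b)
  -- Z is stable under the adjoint action
  have hZinv : ∀ (w : L) {z : L}, z ∈ Z → ⁅w, z⁆ ∈ Z := by
    intro w z hz
    have hle : Z ≤ Submodule.comap (LieAlgebra.ad F L w) Z := by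
      rw [hZdef]
      refine Submodule.span_le.2 ?_
      rintro v ⟨a, ha, b, hb, rfl⟩
      show (LieAlgebra.ad F L w) ⁅a, D b⁆ ∈ Z
      rw [LieAlgebra.ad_apply, hL2 w ha hb]
      exact add_mem (hsZ (N.lie_mem ha) hb) (hsZ ha (N.lie_mem hb))
    have := hle hz
    rwa [Submodule.mem_comap, LieAlgebra.ad_apply] at this
  -- the triple bracket identity (uses char ≠ 2)
  have hg : ∀ {a b c : L}, a ∈ N → b ∈ N → c ∈ N → ⁅⁅a, D b⁆, D c⁆ = 0 := by
    have star : ∀ {a b c : L}, a ∈ N → b ∈ N → c ∈ N →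
        ⁅⁅b, D c⁆, D a⁆ = ⁅⁅a, D b⁆, D c⁆ + ⁅⁅a, D c⁆, D b⁆ := by
      intro a b c ha hb hc
      have h := hL2 (D a) hb hc
      have hBN : ⁅b, D c⁆ ∈ N := hmemN hb (D c)
      have e1 : ⁅D a, ⁅b, D c⁆⁆ = -⁅⁅b, D c⁆, D a⁆ := by
        rw [hsym ha hBN, hBsym ha hBN]
      have e2 : ⁅⁅D a, b⁆, D c⁆ = -⁅⁅a, D b⁆, D c⁆ := by
        rw [hsym ha hb, neg_lie]
      have e3 : ⁅b, D ⁅D a, c⁆⁆ = -⁅⁅a, D c⁆, D b⁆ := by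
        rw [hsym ha hc, map_neg, lie_neg, hBsym hb (hmemN ha (D c))]
      rw [e1, e2, e3] at h
      rw [← neg_add] at h
      exact neg_injective h
    intro a b c ha hb hc
    have gsym : ∀ {u v w : L}, u ∈ N → v ∈ N → w ∈ N →
        ⁅⁅u, D v⁆, D w⁆ = ⁅⁅v, D u⁆, D w⁆ := by
      intro u v w hu hv hw
      rw [hBsym hu hv]
    have e1 := star ha hb hc
    have e2 := star hb ha hc
    rw [gsym hb ha hc] at e2
    -- e2 : ⁅⁅a,D c⁆, D b⁆ = ⁅⁅a, D b⁆, D c⁆ + ⁅⁅b, D c⁆, D a⁆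
    rw [e1, ← add_assoc] at e2
    have h0 : ⁅⁅a, D b⁆, D c⁆ + ⁅⁅a, D b⁆, D c⁆ = 0 := right_eq_add.1 e2
    have h2v : (2 : F) • ⁅⁅a, D b⁆, D c⁆ = 0 := by
      rw [two_smul]; exact h0
    rcases smul_eq_zero.1 h2v with h | h
    · exact absurd h h2F
    · exact h
  -- B(Z, N) = 0
  have hZD0 : ∀ {z : L}, z ∈ Z → ∀ {m : L}, m ∈ N → ⁅z, D m⁆ = 0 := by
    intro z hz m hm
    have hle : Z ≤ LinearMap.ker (LieAlgebra.ad F L (D m)) := by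
      rw [hZdef]
      refine Submodule.span_le.2 ?_
      rintro v ⟨a, ha, b, hb, rfl⟩
      show (LieAlgebra.ad F L (D m)) ⁅a, D b⁆ = 0
      rw [LieAlgebra.ad_apply, ← lie_skew, hg ha hb hm, neg_zero]
    have h1 : ⁅D m, z⁆ = 0 := hle hz
    rw [← lie_skew, h1, neg_zero]
  -- D of Z brackets
  have hDD : ∀ {z : L}, z ∈ Z → ∀ {m : L}, m ∈ N → ⁅D z, D m⁆ ∈ Z := by
    intro z hz m hm
    have h := D.apply_lie_eq_add z (D m)
    rw [hZD0 hz hm, map_zero] at h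
    have h' : ⁅D z, D m⁆ + ⁅z, D (D m)⁆ = 0 := by rw [add_comm]; exact h.symm
    have h1 : ⁅D z, D m⁆ = -⁅z, D (D m)⁆ := eq_neg_of_add_eq_zero_left h'
    rw [h1, ← lie_skew, neg_neg]
    exact hZinv (D (D m)) hz
  -- the ideals
  let Zid : LieIdeal F L :=
    { toSubmodule := Z
      lie_mem := fun {w z} hz => hZinv w hz }
  let Iid : LieIdeal F L :=
    { toSubmodule := N.toSubmodule ⊔ Submodule.map (D : L →ₗ[F] L) N.toSubmodule
      lie_mem := by
        intro w v hv
        obtain ⟨n, hn, dm, hdm, rfl⟩ := Submodule.mem_sup.1 hv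
        obtain ⟨m, hm, rfl⟩ := hdm
        show ⁅w, n + (D : L →ₗ[F] L) m⁆ ∈
          N.toSubmodule ⊔ Submodule.map (D : L →ₗ[F] L) N.toSubmodule
        have hDm : (D : L →ₗ[F] L) m = D m := rfl
        rw [lie_add, hDm]
        have h1 : ⁅w, n⁆ ∈ N := N.lie_mem hn
        have h2 : ⁅w, D m⁆ = D ⁅w, m⁆ - ⁅D w, m⁆ := by
          rw [D.apply_lie_eq_add w m]; abel
        refine add_mem (Submodule.mem_sup_left h1) ?_
        rw [h2]
        refine sub_mem ?_ (Submodule.mem_sup_left (N.lie_mem hm))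
        exact Submodule.mem_sup_right ⟨⁅w, m⁆, N.lie_mem hm, rfl⟩ }
  let J2 : LieIdeal F L :=
    { toSubmodule := N.toSubmodule ⊔ Submodule.map (D : L →ₗ[F] L) Z
      lie_mem := by
        intro w v hv
        obtain ⟨n, hn, dz, hdz, rfl⟩ := Submodule.mem_sup.1 hv
        obtain ⟨z, hz, rfl⟩ := hdz
        show ⁅w, n + (D : L →ₗ[F] L) z⁆ ∈ N.toSubmodule ⊔ Submodule.map (D : L →ₗ[F] L) Z
        have hDz : (D : L →ₗ[F] L) z = D z := rfl
        rw [lie_add, hDz]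
        have h1 : ⁅w, n⁆ ∈ N := N.lie_mem hn
        have h2 : ⁅w, D z⁆ = D ⁅w, z⁆ - ⁅D w, z⁆ := by
          rw [D.apply_lie_eq_add w z]; abel
        refine add_mem (Submodule.mem_sup_left h1) ?_
        rw [h2]
        refine sub_mem ?_ (Submodule.mem_sup_left (N.lie_mem (hZsubN hz)))
        exact Submodule.mem_sup_right ⟨⁅w, z⁆, hZinv w hz, rfl⟩ }
  -- decomposition helper for members of Iid
  have hIdec : ∀ {v : L}, v ∈ Iid → ∃ n ∈ N, ∃ m ∈ N, v = n + D m := by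
    intro v hv
    obtain ⟨n, hn, dm, hdm, rfl⟩ := Submodule.mem_sup.1 hv
    obtain ⟨m, hm, rfl⟩ := hdm
    exact ⟨n, hn, m, hm, rfl⟩
  have c2 : (⁅Iid, Iid⁆ : LieIdeal F L) ≤ J2 := by
    rw [LieSubmodule.lie_le_iff]
    intro u hu v hv
    obtain ⟨n, hn, m, hm, rfl⟩ := hIdec hu
    obtain ⟨n', hn', m', hm', rfl⟩ := hIdec hv
    show ⁅n + D m, n' + D m'⁆ ∈ N.toSubmodule ⊔ Submodule.map (D : L →ₗ[F] L) Z
    simp only [lie_add, add_lie]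
    have t1 : ⁅n, n'⁆ = 0 := hab hn hn'
    have t2 : ⁅D m, n'⁆ ∈ N.toSubmodule := by
      rw [hsym hm hn']
      exact neg_mem (hZsubN (hsZ hm hn'))
    have t3 : ⁅n, D m'⁆ ∈ N.toSubmodule := hZsubN (hsZ hn hm')
    have t4 : ⁅D m, D m'⁆ ∈ N.toSubmodule ⊔ Submodule.map (D : L →ₗ[F] L) Z := by
      have h := D.apply_lie_eq_add m (D m')
      have e : ⁅D m, D m'⁆ = D ⁅m, D m'⁆ - ⁅m, D (D m')⁆ := by rw [h]; abel
      rw [e]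
      refine sub_mem ?_ (Submodule.mem_sup_left (hmemN hm (D (D m'))))
      exact Submodule.mem_sup_right ⟨⁅m, D m'⁆, hsZ hm hm', rfl⟩
    rw [t1]
    exact add_mem (add_mem (zero_mem _) (Submodule.mem_sup_left t2))
      (add_mem (Submodule.mem_sup_left t3) t4)
  have c3 : (⁅Iid, J2⁆ : LieIdeal F L) ≤ Zid := by
    rw [LieSubmodule.lie_le_iff]
    intro u hu v hv
    obtain ⟨n, hn, m, hm, rfl⟩ := hIdec hu
    obtain ⟨n', hn', dz, hdz, rfl⟩ := Submodule.mem_sup.1 hv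
    obtain ⟨z, hz, rfl⟩ := hdz
    have hDz : (D : L →ₗ[F] L) z = D z := rfl
    show ⁅n + D m, n' + (D : L →ₗ[F] L) z⁆ ∈ Z
    rw [hDz]
    simp only [lie_add, add_lie]
    have t1 : ⁅n, n'⁆ = 0 := hab hn hn'
    have t2 : ⁅D m, n'⁆ ∈ Z := by
      rw [hsym hm hn']
      exact neg_mem (hsZ hm hn')
    have t3 : ⁅n, D z⁆ = 0 := by
      rw [hBsym hn (hZsubN hz)]
      exact hZD0 hz hn
    have t4 : ⁅D m, D z⁆ ∈ Z := by
      rw [← lie_skew]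
      exact neg_mem (hDD hz hm)
    rw [t1, t3]
    exact add_mem (add_mem (zero_mem _) t2) (add_mem (zero_mem _) t4)
  have c4 : (⁅Iid, Zid⁆ : LieIdeal F L) ≤ ⊥ := by
    rw [LieSubmodule.lie_le_iff]
    intro u hu z hz
    obtain ⟨n, hn, m, hm, rfl⟩ := hIdec hu
    have hzZ : z ∈ Z := hz
    have hzN : z ∈ N := hZsubN hzZ
    rw [LieSubmodule.mem_bot, add_lie]
    have t1 : ⁅n, z⁆ = 0 := hab hn hzN
    have t2 : ⁅D m, z⁆ = 0 := by
      rw [hsym hm hzN, hBsym hm hzN, hZD0 hzZ hm, neg_zero]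
    rw [t1, t2, add_zero]
  have hidl : idlcs F Iid 3 = ⊥ := by
    refine le_bot_iff.1 ?_
    have s1 : idlcs F Iid 1 ≤ J2 := c2
    have s2 : idlcs F Iid 2 ≤ Zid := by
      rw [idlcs_succ]
      exact le_trans (LieSubmodule.mono_lie_right _ s1) c3
    rw [idlcs_succ]
    exact le_trans (LieSubmodule.mono_lie_right _ s2) c4
  have hInil : LieRing.IsNilpotent Iid := isNilpotent_of_idlcs F Iid 3 hidl
  have hle : Iid ≤ nilrad F L := le_sSup hInil
  intro x hx
  have hDx : D x ∈ Iid := by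
    show D x ∈ N.toSubmodule ⊔ Submodule.map (D : L →ₗ[F] L) N.toSubmodule
    exact Submodule.mem_sup_right ⟨x, hx, rfl⟩
  exact hle hDx
end

section
/- Let L be a finite-dimensional solvable Lie algebra of nilpotent length k with more than one minimal ideal. Then there exists a minimal ideal A of L such that L/A also has nilpotent length k. -/
variable (F : Type*) [Field F]

section MyHelpers

variable {F} {L : Type*} [LieRing L] [LieAlgebra F L]
  {L' : Type*} [LieRing L'] [LieAlgebra F L']

open LieSubmodule LieModule


lemma myLcs_succ_le (I : LieIdeal F L) (k : ℕ) : I.lcs L (k + 1) ≤ I.lcs L k := by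
  rw [LieIdeal.lcs_succ]
  exact LieSubmodule.lie_le_right _ _

lemma myLcs_antitone (I : LieIdeal F L) {k l : ℕ} (h : k ≤ l) : I.lcs L l ≤ I.lcs L k := by
  induction l with
  | zero => simp_all
  | succ l ih =>
    rcases Nat.lt_or_ge k (l+1) with h' | h'
    · exact (myLcs_succ_le I l).trans (ih (by omega))
    · have : k = l + 1 := by omega
      subst this; exact le_refl _

lemma myLcs_mono {I J : LieIdeal F L} (h : I ≤ J) (k : ℕ) : I.lcs L k ≤ J.lcs L k := by
  induction k with
  | zero => simp
  | succ k ih =>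
    rw [LieIdeal.lcs_succ, LieIdeal.lcs_succ]
    exact LieSubmodule.mono_lie h ih


lemma myIsNilpotent_iff_lcs (I : LieIdeal F L) :
    LieRing.IsNilpotent I ↔ ∃ k, I.lcs L k = ⊥ := by
  set ι : ↥I →ₗ[F] L := I.incl.toLinearMap with hι
  set S : ℕ → Submodule F L :=
    fun k => Submodule.map ι (LieSubmodule.toSubmodule (lowerCentralSeries F I I k)) with hS
  have hA : ∀ k, LieSubmodule.toSubmodule (I.lcs L (k + 1)) ≤ S k := by
    intro k
    induction k with
    | zero =>
      intro x hx
      rw [LieSubmodule.mem_toSubmodule] at hx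
      have h1 : I.lcs L 1 = ⁅I, (⊤ : LieSubmodule F L L)⁆ := by
        rw [LieIdeal.lcs_succ, LieIdeal.lcs_zero]
      rw [h1] at hx
      have hxI : x ∈ I := LieSubmodule.lie_le_left I ⊤ hx
      exact ⟨⟨x, hxI⟩, by simp, rfl⟩
    | succ k ih =>
      have h1 : I.lcs L (k + 2) = ⁅I, I.lcs L (k + 1)⁆ := LieIdeal.lcs_succ I L (k + 1)
      rw [h1, LieSubmodule.lieIdeal_oper_eq_linear_span', Submodule.span_le]
      rintro x ⟨y, hy, n, hn, rfl⟩
      have hn' : n ∈ S k := ih (by rwa [LieSubmodule.mem_toSubmodule])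
      obtain ⟨m, hm, rfl⟩ := hn'
      have hm' : m ∈ lowerCentralSeries F I I k := hm
      refine ⟨⁅(⟨y, hy⟩ : ↥I), m⁆, ?_, rfl⟩
      have : ⁅(⟨y, hy⟩ : ↥I), m⁆ ∈ lowerCentralSeries F I I (k + 1) := by
        rw [LieModule.lowerCentralSeries_succ]
        exact LieSubmodule.lie_mem_lie (LieSubmodule.mem_top _) hm'
      exact this
  have hB : ∀ k, S k ≤ LieSubmodule.toSubmodule (I.lcs L k) := by
    intro k
    induction k with
    | zero => simp
    | succ k ih =>
      have h2 : LieSubmodule.toSubmodule (lowerCentralSeries F I I (k + 1)) =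
          Submodule.span F {z : ↥I | ∃ x ∈ (⊤ : LieIdeal F ↥I),
            ∃ n ∈ lowerCentralSeries F I I k, ⁅x, n⁆ = z} := by
        rw [LieModule.lowerCentralSeries_succ, LieSubmodule.lieIdeal_oper_eq_linear_span']
      show Submodule.map ι _ ≤ _
      rw [h2, Submodule.map_span, Submodule.span_le]
      rintro _ ⟨z, ⟨x, -, n, hn, rfl⟩, rfl⟩
      have hn' : ι n ∈ I.lcs L k := by
        have := ih ⟨n, hn, rfl⟩
        rwa [LieSubmodule.mem_toSubmodule] at this
      have hmem : ι ⁅x, n⁆ ∈ I.lcs L (k + 1) := by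
        rw [LieIdeal.lcs_succ]
        have heq : ι ⁅x, n⁆ = ⁅(x : L), ι n⁆ := rfl
        rw [heq]
        exact LieSubmodule.lie_mem_lie x.2 hn'
      simpa using hmem
  constructor
  · intro hI; obtain ⟨k, hk⟩ := (LieModule.isNilpotent_iff F I I).mp hI
    refine ⟨k + 1, ?_⟩
    have h3 : LieSubmodule.toSubmodule (I.lcs L (k + 1)) ≤ ⊥ := by
      refine (hA k).trans ?_
      rw [hS]
      simp [hk]
    rw [_root_.eq_bot_iff, ← LieSubmodule.toSubmodule_le_toSubmodule,
      LieSubmodule.bot_toSubmodule]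
    exact h3
  · rintro ⟨k, hk⟩
    refine (LieModule.isNilpotent_iff F I I).mpr ⟨k, ?_⟩
    rw [LieSubmodule.eq_bot_iff]
    intro m hm
    have h4 : ι m ∈ S k := ⟨m, hm, rfl⟩
    have h5 : ι m ∈ LieSubmodule.toSubmodule (I.lcs L k) := hB k h4
    rw [hk] at h5
    simp only [LieSubmodule.bot_toSubmodule, Submodule.mem_bot] at h5
    have : m = 0 := Subtype.ext h5
    simp [this]


lemma myMap_top (f : L →ₗ⁅F⁆ L') (hf : Function.Surjective f) :
    LieIdeal.map f ⊤ = ⊤ := by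
  rw [eq_top_iff]
  intro y _
  obtain ⟨x, rfl⟩ := hf y
  exact LieIdeal.mem_map (LieSubmodule.mem_top x)

lemma myMap_lcs (f : L →ₗ⁅F⁆ L') (hf : Function.Surjective f) (I : LieIdeal F L) (k : ℕ) :
    LieIdeal.map f (I.lcs L k) = (LieIdeal.map f I).lcs L' k := by
  induction k with
  | zero => simpa using myMap_top f hf
  | succ k ih =>
    rw [LieIdeal.lcs_succ, LieIdeal.lcs_succ, LieIdeal.map_bracket_eq f hf, ih]

lemma mySupLcs (I J : LieIdeal F L) :
    ∀ s m n, m + n = s → (I ⊔ J).lcs L s ≤ I.lcs L m ⊔ J.lcs L n := by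
  intro s
  induction s with
  | zero =>
    rintro m n h
    obtain ⟨rfl, rfl⟩ : m = 0 ∧ n = 0 := by omega
    simp
  | succ s ih =>
    rintro m n hmn
    rcases m with _ | m
    · simp
    rcases n with _ | n
    · simp
    have h1 : m + (n + 1) = s := by omega
    have h2 : (m + 1) + n = s := by omega
    rw [LieIdeal.lcs_succ, LieSubmodule.sup_lie]
    apply sup_le
    · refine le_trans (LieSubmodule.mono_lie_right _ (ih m (n + 1) h1)) ?_
      rw [LieSubmodule.lie_sup]
      apply sup_le
      · rw [← LieIdeal.lcs_succ]
        exact le_sup_left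
      · exact le_trans (LieSubmodule.lie_le_right _ _) le_sup_right
    · refine le_trans (LieSubmodule.mono_lie_right _ (ih (m + 1) n h2)) ?_
      rw [LieSubmodule.lie_sup]
      apply sup_le
      · exact le_trans (LieSubmodule.lie_le_right _ _) le_sup_left
      · rw [← LieIdeal.lcs_succ]
        exact le_sup_right


lemma myBot_nilpotent : LieRing.IsNilpotent (⊥ : LieIdeal F L) := by
  rw [myIsNilpotent_iff_lcs]
  refine ⟨1, ?_⟩
  rw [LieIdeal.lcs_succ, LieIdeal.lcs_zero]
  exact LieSubmodule.bot_lie _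

lemma myIsNilpotent_sup {I J : LieIdeal F L} (hI : LieRing.IsNilpotent I)
    (hJ : LieRing.IsNilpotent J) : LieRing.IsNilpotent (I ⊔ J : LieIdeal F L) := by
  rw [myIsNilpotent_iff_lcs] at hI hJ ⊢
  obtain ⟨m, hm⟩ := hI
  obtain ⟨n, hn⟩ := hJ
  refine ⟨m + n, ?_⟩
  rw [_root_.eq_bot_iff]
  refine le_trans (mySupLcs I J (m + n) m n rfl) ?_
  rw [hm, hn]
  simp

lemma myLe_nilrad {I : LieIdeal F L} (h : LieRing.IsNilpotent I) : I ≤ nilrad F L :=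
  le_sSup h

lemma myNilrad_nilpotent [FiniteDimensional F L] :
    LieRing.IsNilpotent (nilrad F L) := by
  set S := {I : LieIdeal F L | LieRing.IsNilpotent I} with hS
  have hbot : (⊥ : LieIdeal F L) ∈ S := myBot_nilpotent
  have hwf : WellFounded ((· > ·) : LieIdeal F L → LieIdeal F L → Prop) := IsWellFounded.wf
  obtain ⟨M, hMS, hmax⟩ := hwf.has_min S ⟨⊥, hbot⟩
  have hle : ∀ I ∈ S, I ≤ M := by
    intro I hI
    have hsup : I ⊔ M ∈ S := myIsNilpotent_sup hI hMS
    by_contra hcon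
    have hlt : M < I ⊔ M := lt_of_le_of_ne le_sup_right (by
      intro h
      exact hcon (h ▸ le_sup_left))
    exact hmax _ hsup hlt
  have : nilrad F L = M := le_antisymm (sSup_le hle) (le_sSup hMS)
  rw [this]
  exact hMS

lemma myNilrad_ne_bot [Nontrivial L] [LieAlgebra.IsSolvable L] : nilrad F L ≠ ⊥ := by
  classical
  obtain ⟨k, hk⟩ := LieAlgebra.IsSolvable.solvable (R := F) (L := L)
  have h0 : LieAlgebra.derivedSeries F L 0 ≠ ⊥ := by
    simp only [LieAlgebra.derivedSeries_def, LieAlgebra.derivedSeriesOfIdeal_zero]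
    intro h
    have : ∀ x : L, x = 0 := fun x => by
      have : x ∈ (⊤ : LieIdeal F L) := LieSubmodule.mem_top x
      rw [h] at this
      exact (LieSubmodule.mem_bot _).mp this
    obtain ⟨a, b, hab⟩ := exists_pair_ne L
    exact hab ((this a).trans (this b).symm)
  -- find minimal k with derivedSeries = ⊥
  have hex : ∃ k, LieAlgebra.derivedSeries F L k = ⊥ := ⟨k, hk⟩
  have hfind : LieAlgebra.derivedSeries F L (Nat.find hex) = ⊥ := Nat.find_spec hex
  have hpos : Nat.find hex ≠ 0 := fun h => h0 (h ▸ hfind)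
  obtain ⟨k', hsucc⟩ : ∃ k', Nat.find hex = k' + 1 := ⟨Nat.find hex - 1, by omega⟩
  set I := LieAlgebra.derivedSeries F L k' with hI
  have hIne : I ≠ ⊥ := Nat.find_min hex (by omega)
  have habel : ⁅I, I⁆ = ⊥ := by
    have h5 : LieAlgebra.derivedSeries F L (k' + 1) = ⁅I, I⁆ := by
      rw [hI, LieAlgebra.derivedSeries_def, LieAlgebra.derivedSeries_def,
        LieAlgebra.derivedSeriesOfIdeal_succ]
    rw [← h5, ← hsucc]
    exact hfind
  have hnil : LieRing.IsNilpotent I := by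
    rw [myIsNilpotent_iff_lcs]
    refine ⟨2, ?_⟩
    rw [_root_.eq_bot_iff]
    have : I.lcs L 2 = ⁅I, ⁅I, (⊤ : LieSubmodule F L L)⁆⁆ := by
      rw [LieIdeal.lcs_succ, LieIdeal.lcs_succ, LieIdeal.lcs_zero]
    rw [this, ← habel]
    exact LieSubmodule.mono_lie_right _ (LieSubmodule.lie_le_left _ _)
  intro hbot
  exact hIne (le_antisymm (hbot ▸ myLe_nilrad hnil) bot_le)


lemma myQuotMk_surj (A : LieIdeal F L) : Function.Surjective (lieQuotMk A) :=
  LieSubmodule.Quotient.surjective_mk' A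

lemma myQuotMk_eq_zero {A : LieIdeal F L} {x : L} : lieQuotMk A x = 0 ↔ x ∈ A :=
  LieSubmodule.Quotient.mk_eq_zero A

lemma myUpperNil_succ (L : Type*) [LieRing L] [LieAlgebra F L] (n : ℕ) :
    upperNil F L (n + 1)
      = LieIdeal.comap (lieQuotMk (upperNil F L n)) (nilrad F (L ⧸ upperNil F L n)) := rfl

instance myQuotSolvable (A : LieIdeal F L) [LieAlgebra.IsSolvable L] :
    LieAlgebra.IsSolvable (L ⧸ A) :=
  (myQuotMk_surj A).lieAlgebra_isSolvable

instance myQuotFinite (A : LieIdeal F L) [FiniteDimensional F L] :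
    FiniteDimensional F (L ⧸ A) :=
  Module.Finite.of_surjective (LieSubmodule.Quotient.mk' A).toLinearMap
    (LieSubmodule.Quotient.surjective_mk' A)

lemma myUpperNil_le_succ (n : ℕ) : upperNil F L n ≤ upperNil F L (n + 1) := by
  intro x hx
  rw [myUpperNil_succ, LieIdeal.mem_comap]
  have : lieQuotMk (upperNil F L n) x = 0 := myQuotMk_eq_zero.mpr hx
  rw [this]
  exact (nilrad F (L ⧸ upperNil F L n)).zero_mem

lemma myUpperNil_mono {m n : ℕ} (h : m ≤ n) : upperNil F L m ≤ upperNil F L n := by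
  induction n with
  | zero => simp_all
  | succ n ih =>
    rcases Nat.lt_or_ge m (n + 1) with h' | h'
    · exact (ih (by omega)).trans (myUpperNil_le_succ n)
    · have : m = n + 1 := by omega
      subst this; exact le_refl _

lemma myExists_upperNil_top [FiniteDimensional F L] [LieAlgebra.IsSolvable L] :
    ∃ n, upperNil F L n = ⊤ := by
  by_contra hcon
  push_neg at hcon
  have hstrict : ∀ n, upperNil F L n < upperNil F L (n + 1) := by
    intro n
    haveI : Nontrivial (L ⧸ upperNil F L n) := by
      obtain ⟨x, hx⟩ : ∃ x, x ∉ upperNil F L n := by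
        by_contra hall
        push_neg at hall
        exact hcon n (eq_top_iff.mpr fun y _ => hall y)
      exact ⟨⟨lieQuotMk (upperNil F L n) x, 0, fun h => hx (myQuotMk_eq_zero.mp h)⟩⟩
    have hnil : nilrad F (L ⧸ upperNil F L n) ≠ ⊥ := myNilrad_ne_bot
    obtain ⟨y, hy, hy0⟩ : ∃ y ∈ nilrad F (L ⧸ upperNil F L n), y ≠ 0 := by
      by_contra hall
      push_neg at hall
      exact hnil ((LieSubmodule.eq_bot_iff _).mpr hall)
    obtain ⟨x, rfl⟩ := myQuotMk_surj (upperNil F L n) y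
    refine lt_of_le_of_ne (myUpperNil_le_succ n) ?_
    intro heq
    have hx1 : x ∈ upperNil F L (n + 1) := by
      rw [myUpperNil_succ, LieIdeal.mem_comap]; exact hy
    rw [← heq] at hx1
    exact hy0 (myQuotMk_eq_zero.mpr hx1)
  have hrank : ∀ n, n ≤ Module.finrank F (LieSubmodule.toSubmodule (upperNil F L n)) := by
    intro n
    induction n with
    | zero => omega
    | succ n ih =>
      have hlt : LieSubmodule.toSubmodule (upperNil F L n)
          < LieSubmodule.toSubmodule (upperNil F L (n + 1)) := by
        refine lt_of_le_of_ne ?_ ?_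
        · exact (LieSubmodule.toSubmodule_le_toSubmodule _ _).mpr (hstrict n).le
        · intro h
          exact (hstrict n).ne ((LieSubmodule.toSubmodule_inj (N := _) (N' := _)).mp h)
      have := Submodule.finrank_lt_finrank_of_lt hlt
      omega
  have h1 := hrank (Module.finrank F L + 1)
  have h2 := Submodule.finrank_le (LieSubmodule.toSubmodule (upperNil F L (Module.finrank F L + 1)))
  omega

lemma myUpperNil_nilLen_top [FiniteDimensional F L] [LieAlgebra.IsSolvable L] :
    upperNil F L (nilLen F L) = ⊤ :=
  Nat.sInf_mem (myExists_upperNil_top (F := F) (L := L))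


lemma myMap_upperNil [FiniteDimensional F L] {L' : Type*} [LieRing L'] [LieAlgebra F L']
    (f : L →ₗ⁅F⁆ L') (hf : Function.Surjective f) :
    ∀ n, ∀ x ∈ upperNil F L n, f x ∈ upperNil F L' n := by
  intro n
  induction n with
  | zero =>
    intro x hx
    have : x = 0 := by simpa [upperNil] using hx
    simp [this]
  | succ n ih =>
    set NL := upperNil F L n with hNL
    set NL' := upperNil F L' n with hNL'
    set π := lieQuotMk NL with hπ
    set π' := lieQuotMk NL' with hπ'
    set σ : L →ₗ⁅F⁆ (L' ⧸ NL') := π'.comp f with hσ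
    have hσsurj : Function.Surjective σ := by
      rw [hσ]
      rw [LieHom.coe_comp]
      exact (myQuotMk_surj NL').comp hf
    set P := upperNil F L (n + 1) with hP
    obtain ⟨c, hc⟩ := (myIsNilpotent_iff_lcs (nilrad F (L ⧸ NL))).mp myNilrad_nilpotent
    have hmapP : LieIdeal.map π P ≤ nilrad F (L ⧸ NL) := by
      rw [LieIdeal.map_le_iff_le_comap]
      exact le_of_eq (myUpperNil_succ L n)
    have hPlcs : P.lcs L c ≤ NL := by
      intro x hx
      have h1 : π x ∈ (LieIdeal.map π P).lcs (L ⧸ NL) c := by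
        rw [← myMap_lcs π (myQuotMk_surj NL) P c]
        exact LieIdeal.mem_map hx
      have h2 : π x ∈ (nilrad F (L ⧸ NL)).lcs (L ⧸ NL) c := myLcs_mono hmapP c h1
      rw [hc] at h2
      exact myQuotMk_eq_zero.mp ((LieSubmodule.mem_bot _).mp h2)
    have hσP : (LieIdeal.map σ P).lcs (L' ⧸ NL') c = ⊥ := by
      rw [← myMap_lcs σ hσsurj P c, LieIdeal.map_eq_bot_iff]
      intro x hx
      rw [LieHom.mem_ker]
      show π' (f x) = 0
      exact myQuotMk_eq_zero.mpr (ih x (hPlcs hx))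
    have hnil : LieRing.IsNilpotent (LieIdeal.map σ P) :=
      (myIsNilpotent_iff_lcs _).mpr ⟨c, hσP⟩
    have hle : LieIdeal.map σ P ≤ nilrad F (L' ⧸ NL') := myLe_nilrad hnil
    intro x hx
    rw [myUpperNil_succ, LieIdeal.mem_comap]
    exact hle (LieIdeal.mem_map hx)

lemma myKey [FiniteDimensional F L] (A B : LieIdeal F L) (hAB : A ⊓ B = ⊥) :
    ∀ j, LieIdeal.comap (lieQuotMk A) (upperNil F (L ⧸ A) j)
        ⊓ LieIdeal.comap (lieQuotMk B) (upperNil F (L ⧸ B) j) ≤ upperNil F L j := by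
  have hker : ∀ (C : LieIdeal F L), LieIdeal.comap (lieQuotMk C) (⊥ : LieIdeal F (L ⧸ C)) = C := by
    intro C
    ext x
    rw [LieIdeal.mem_comap, LieSubmodule.mem_bot]
    exact myQuotMk_eq_zero
  intro j
  induction j with
  | zero =>
    show LieIdeal.comap (lieQuotMk A) ⊥ ⊓ LieIdeal.comap (lieQuotMk B) ⊥ ≤ (⊥ : LieIdeal F L)
    rw [hker, hker, hAB]
  | succ j ih =>
    set D := LieIdeal.comap (lieQuotMk A) (upperNil F (L ⧸ A) (j + 1))
        ⊓ LieIdeal.comap (lieQuotMk B) (upperNil F (L ⧸ B) (j + 1)) with hD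
    -- for each of A, B we get a bound on the lcs of D
    have key : ∀ (C : LieIdeal F L),
        D ≤ LieIdeal.comap (lieQuotMk C) (upperNil F (L ⧸ C) (j + 1)) →
        ∃ c : ℕ, ∀ x ∈ D.lcs L c, lieQuotMk C x ∈ upperNil F (L ⧸ C) j := by
      intro C hDC
      set NC := upperNil F (L ⧸ C) j with hNC
      set μ := lieQuotMk NC with hμ
      set ν : L →ₗ⁅F⁆ ((L ⧸ C) ⧸ NC) := μ.comp (lieQuotMk C) with hν
      have hνsurj : Function.Surjective ν := by
        rw [hν, LieHom.coe_comp]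
        exact (myQuotMk_surj NC).comp (myQuotMk_surj C)
      obtain ⟨c, hc⟩ := (myIsNilpotent_iff_lcs (nilrad F ((L ⧸ C) ⧸ NC))).mp myNilrad_nilpotent
      refine ⟨c, ?_⟩
      have hmapD : LieIdeal.map ν D ≤ nilrad F ((L ⧸ C) ⧸ NC) := by
        rw [LieIdeal.map_le_iff_le_comap]
        intro x hx
        rw [LieIdeal.mem_comap]
        show μ (lieQuotMk C x) ∈ _
        have h1 : lieQuotMk C x ∈ upperNil F (L ⧸ C) (j + 1) := hDC hx
        rw [myUpperNil_succ, LieIdeal.mem_comap] at h1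
        exact h1
      intro x hx
      have h1 : ν x ∈ (LieIdeal.map ν D).lcs _ c := by
        rw [← myMap_lcs ν hνsurj D c]
        exact LieIdeal.mem_map hx
      have h2 := myLcs_mono hmapD c h1
      rw [hc] at h2
      have h3 : ν x = 0 := (LieSubmodule.mem_bot _).mp h2
      have h4 : μ (lieQuotMk C x) = 0 := h3
      exact myQuotMk_eq_zero.mp h4
    obtain ⟨cA, hcA⟩ := key A inf_le_left
    obtain ⟨cB, hcB⟩ := key B inf_le_right
    set c := max cA cB with hcdef
    have hDlcs : D.lcs L c ≤ upperNil F L j := by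
      refine le_trans ?_ ih
      intro x hx
      rw [LieSubmodule.mem_inf]
      constructor
      · rw [LieIdeal.mem_comap]
        exact hcA x (myLcs_antitone D (le_max_left cA cB) hx)
      · rw [LieIdeal.mem_comap]
        exact hcB x (myLcs_antitone D (le_max_right cA cB) hx)
    set π := lieQuotMk (upperNil F L j) with hπ
    have hmapbot : LieIdeal.map π (upperNil F L j) = ⊥ := by
      rw [LieIdeal.map_eq_bot_iff]
      intro x hx
      rw [LieHom.mem_ker]
      exact myQuotMk_eq_zero.mpr hx
    have hElcs : (LieIdeal.map π D).lcs (L ⧸ upperNil F L j) c = ⊥ := by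
      rw [← myMap_lcs π (myQuotMk_surj _) D c]
      rw [_root_.eq_bot_iff, ← hmapbot]
      exact (LieIdeal.gc_map_comap π).monotone_l hDlcs
    have hnil : LieRing.IsNilpotent (LieIdeal.map π D) :=
      (myIsNilpotent_iff_lcs _).mpr ⟨c, hElcs⟩
    have hle : LieIdeal.map π D ≤ nilrad F (L ⧸ upperNil F L j) := myLe_nilrad hnil
    intro x hx
    rw [myUpperNil_succ, LieIdeal.mem_comap]
    exact hle (LieIdeal.mem_map hx)


end MyHelpers

/-- If `L` has nilpotent length `k` and more than one minimal ideal, then some minimal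
ideal `A` satisfies `n(L ⧸ A) = k`. -/
theorem stmt13 {F L : Type*} [Field F] [LieRing L] [LieAlgebra F L]
    [FiniteDimensional F L] [LieAlgebra.IsSolvable L]
    (A₁ A₂ : LieIdeal F L) (h1 : IsMinIdeal F A₁) (h2 : IsMinIdeal F A₂) (hne : A₁ ≠ A₂) :
    ∃ A : LieIdeal F L, IsMinIdeal F A ∧ nilLen F (L ⧸ A) = nilLen F L := by
  by_contra hcon
  push_neg at hcon
  set k := nilLen F L with hk
  have hktop : upperNil F L k = ⊤ := myUpperNil_nilLen_top
  have hkpos : 1 ≤ k := by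
    by_contra hk0
    have hk0' : k = 0 := by omega
    have : upperNil F L 0 = ⊤ := by rw [← hk0']; exact hktop
    have hbot : (⊥ : LieIdeal F L) = ⊤ := this
    exact h1.1 (le_antisymm (le_trans le_top hbot.ge) bot_le)
  have hAB : A₁ ⊓ A₂ = ⊥ := by
    rcases lt_or_eq_of_le (inf_le_left : A₁ ⊓ A₂ ≤ A₁) with hlt | heq
    · exact h1.2 _ hlt
    · exfalso
      have hle : A₁ ≤ A₂ := heq ▸ inf_le_right
      rcases lt_or_eq_of_le hle with hlt | heq2
      · exact h1.1 (h2.2 _ hlt)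
      · exact hne heq2
  have hquot : ∀ (A : LieIdeal F L), IsMinIdeal F A → upperNil F (L ⧸ A) (k - 1) = ⊤ := by
    intro A hA
    have htop : upperNil F (L ⧸ A) k = ⊤ := by
      rw [eq_top_iff]
      intro y _
      obtain ⟨x, rfl⟩ := myQuotMk_surj A y
      exact myMap_upperNil (lieQuotMk A) (myQuotMk_surj A) k x (hktop ▸ LieSubmodule.mem_top x)
    have hle' : nilLen F (L ⧸ A) ≤ k := Nat.sInf_le htop
    have hlt : nilLen F (L ⧸ A) < k := lt_of_le_of_ne hle' (hcon A hA)
    have hmem : upperNil F (L ⧸ A) (nilLen F (L ⧸ A)) = ⊤ :=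
      Nat.sInf_mem (s := {n | upperNil F (L ⧸ A) n = ⊤}) ⟨k, htop⟩
    rw [eq_top_iff, ← hmem]
    exact myUpperNil_mono (by omega)
  have hA1 := hquot A₁ h1
  have hA2 := hquot A₂ h2
  have hcomap : ∀ (A : LieIdeal F L),
      LieIdeal.comap (lieQuotMk A) (⊤ : LieIdeal F (L ⧸ A)) = ⊤ := by
    intro A
    rw [eq_top_iff]
    intro x _
    rw [LieIdeal.mem_comap]
    exact LieSubmodule.mem_top _
  have hfinal := myKey A₁ A₂ hAB (k - 1)
  rw [hA1, hA2, hcomap, hcomap] at hfinal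
  have htop : upperNil F L (k - 1) = ⊤ := le_antisymm le_top (le_trans le_top (by simpa using hfinal))
  have : k ≤ k - 1 := Nat.sInf_le htop
  omega
end

section
/- Let L be a finite-dimensional solvable Lie A-algebra (all nilpotent subalgebras abelian) that is primitive with unique minimal ideal A = N(L), and let M be a maximal subalgebra of L containing A. Then N(M) = A. -/
variable (F : Type*) [Field F]

/-- If `L` is a solvable `A`-algebra which is primitive with unique minimal ideal
`A = N(L)`, and `M` is a maximal subalgebra containing `A`, then `N(M) = A`. -/
theorem stmt19 {F L : Type*} [Field F] [LieRing L] [LieAlgebra F L]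
    [FiniteDimensional F L] [LieAlgebra.IsSolvable L]
    (hAalg : ∀ S : LieSubalgebra F L, LieRing.IsNilpotent S → IsLieAbelian S)
    (A : LieIdeal F L) (hAN : A = nilrad F L) (hmin : IsMinIdeal F A)
    (huniq : ∀ B : LieIdeal F L, IsMinIdeal F B → B = A)
    (hprim : ∃ M₀ : LieSubalgebra F L, IsMaxSub F M₀ ∧
      ∀ I : LieIdeal F L, (I : Set L) ⊆ (M₀ : Set L) → I = ⊥)
    (M : LieSubalgebra F L) (hM : IsMaxSub F M) (hAM : (A : Set L) ⊆ (M : Set L)) :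
    ∀ x : M, x ∈ nilrad F M ↔ (x : L) ∈ A := by
  
  classical
  obtain ⟨M₀, hM₀max, hM₀core⟩ := hprim
  -- `A` is abelian
  have hAA : ⁅A, A⁆ = (⊥ : LieIdeal F L) := by
    rcases lt_or_eq_of_le (LieSubmodule.lie_le_left A A) with h | h
    · exact hmin.2 _ h
    · exfalso
      have hDk : ∀ k, LieAlgebra.derivedSeriesOfIdeal F L k A = A := by
        intro k
        induction k with
        | zero => simp [LieAlgebra.derivedSeriesOfIdeal_zero]
        | succ n ih => rw [LieAlgebra.derivedSeriesOfIdeal_succ, ih, h]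
      obtain ⟨k, hk⟩ := LieAlgebra.IsSolvable.solvable F L
      have hle : A ≤ ⊥ := by
        rw [← hk, LieAlgebra.derivedSeries_def]
        have h2 := LieAlgebra.derivedSeriesOfIdeal_le (le_top : A ≤ ⊤) (le_refl k)
        rwa [hDk k] at h2
      exact hmin.1 (le_bot_iff.mp hle)
  have hAab : ∀ a ∈ A, ∀ b ∈ A, ⁅a, b⁆ = 0 := by
    intro a ha b hb
    have h := LieSubmodule.lie_mem_lie ha hb
    rw [hAA] at h
    exact (LieSubmodule.mem_bot _).mp h
  -- `L = A + M₀`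
  have hAnsub : ¬ ((A : Set L) ⊆ (M₀ : Set L)) := fun h => hmin.1 (hM₀core A h)
  obtain ⟨a₀, ha₀A, ha₀M⟩ := Set.not_subset.mp hAnsub
  let S : LieSubalgebra F L :=
    { toSubmodule := A.toSubmodule ⊔ M₀.toSubmodule
      lie_mem' := by
        intro x y hx hy
        obtain ⟨ax, haxA, mx, hmx, rfl⟩ := Submodule.mem_sup.mp hx
        obtain ⟨ay, hayA, my, hmy, rfl⟩ := Submodule.mem_sup.mp hy
        have h1 : ⁅ax + mx, ay⁆ ∈ A := A.lie_mem hayA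
        have h2 : ⁅ax, my⁆ ∈ A := by
          rw [← lie_skew]
          exact neg_mem (A.lie_mem haxA)
        have h3 : ⁅mx, my⁆ ∈ M₀ := M₀.lie_mem hmx hmy
        have e : ⁅ax + mx, ay + my⁆ = (⁅ax + mx, ay⁆ + ⁅ax, my⁆) + ⁅mx, my⁆ := by
          simp only [lie_add, add_lie]
          abel
        rw [e]
        exact Submodule.add_mem _
          (Submodule.mem_sup_left (Submodule.add_mem _ h1 h2))
          (Submodule.mem_sup_right h3) }
  have hMleS : M₀ ≤ S := fun x hx => Submodule.mem_sup_right hx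
  have hSne : M₀ ≠ S := by
    intro h
    apply ha₀M
    rw [h]
    exact Submodule.mem_sup_left ha₀A
  have hStop : S = ⊤ := hM₀max.2 S (lt_of_le_of_ne hMleS hSne)
  have hdecomp : ∀ x : L, ∃ a ∈ A, ∃ m ∈ M₀, a + m = x := by
    intro x
    have hx : x ∈ S := by rw [hStop]; exact LieSubalgebra.mem_top x
    exact Submodule.mem_sup.mp hx
  -- the centraliser of `A` is `A`
  have hCent : ∀ x : L, (∀ b ∈ A, ⁅x, b⁆ = 0) → x ∈ A := by
    intro x hx
    let Csub : Submodule F L :=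
      { carrier := {y | ∀ b ∈ A, ⁅y, b⁆ = 0}
        add_mem' := fun {y z} hy hz b hb => by rw [add_lie, hy b hb, hz b hb, add_zero]
        zero_mem' := fun b hb => zero_lie b
        smul_mem' := fun c y hy b hb => by rw [smul_lie, hy b hb, smul_zero] }
    let D : LieIdeal F L :=
      { toSubmodule := M₀.toSubmodule ⊓ Csub
        lie_mem := by
          rintro z y ⟨hyM, hyC⟩
          obtain ⟨az, hazA, mz, hmz, rfl⟩ := hdecomp z
          refine ⟨?_, ?_⟩
          · have h1 : ⁅az, y⁆ = 0 := by
              rw [← lie_skew, hyC az hazA, neg_zero]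
            show ⁅az + mz, y⁆ ∈ M₀.toSubmodule
            rw [add_lie, h1, zero_add]
            exact M₀.lie_mem hmz hyM
          · intro b hb
            rw [lie_lie, hyC b hb, lie_zero, hyC _ (A.lie_mem hb), sub_zero]
        }
    have hDbot : D = ⊥ := hM₀core D (fun y hy => hy.1)
    obtain ⟨ax, haxA, mx, hmx, hsum⟩ := hdecomp x
    have hmxC : ∀ b ∈ A, ⁅mx, b⁆ = 0 := by
      intro b hb
      have h0 : ⁅ax + mx, b⁆ = 0 := by rw [hsum]; exact hx b hb
      rwa [add_lie, hAab ax haxA b hb, zero_add] at h0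
    have hmxD : mx ∈ D := ⟨hmx, hmxC⟩
    rw [hDbot] at hmxD
    have hmx0 : mx = 0 := (LieSubmodule.mem_bot _).mp hmxD
    rw [← hsum, hmx0, add_zero]
    exact haxA
  -- the ideal of `M` corresponding to `A`
  let A' : LieIdeal F M :=
    { toSubmodule := A.toSubmodule.comap M.incl.toLinearMap
      lie_mem := by
        intro y m hm
        show M.incl.toLinearMap ⁅y, m⁆ ∈ A.toSubmodule
        have : (⁅y, m⁆ : L) ∈ A := A.lie_mem hm
        exact this }
  have hmemA' : ∀ w : M, w ∈ A' ↔ (w : L) ∈ A := fun w => Iff.rfl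
  have hA'ab : IsLieAbelian A' := by
    constructor
    intro u v
    apply Subtype.ext
    apply Subtype.ext
    have hcoe : (((⁅u, v⁆ : A') : M) : L) = ⁅((u : M) : L), ((v : M) : L)⁆ := by
      rfl
    rw [hcoe]
    exact hAab _ u.2 _ v.2
  haveI hA'nilp : LieRing.IsNilpotent A' := by
    infer_instance
  intro x
  constructor
  · -- hard direction: `nilrad F M ≤ A'`
    intro hx
    have key : nilrad F M ≤ A' := by
      apply sSup_le
      rintro I hI
      intro z hz
      haveI hnil : LieRing.IsNilpotent I := hI
      let f : (↥I) →ₗ⁅F⁆ L := M.incl.comp I.incl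
      haveI hfr : LieRing.IsNilpotent f.range :=
        Function.Surjective.lieAlgebra_isNilpotent f.surjective_rangeRestrict
      have hrab : IsLieAbelian f.range := hAalg _ hfr
      have hPP : ∀ p ∈ f.range, ∀ q ∈ f.range, ⁅p, q⁆ = (0 : L) := by
        intro p hp q hq
        have ht := hrab.trivial ⟨p, hp⟩ ⟨q, hq⟩
        have h2 := congrArg (Subtype.val) ht
        rw [LieSubalgebra.coe_bracket] at h2
        exact h2
      have hIP : ∀ w : M, w ∈ I → (w : L) ∈ f.range := fun w hw => ⟨⟨w, hw⟩, rfl⟩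
      have hPA : ∀ p ∈ f.range, ∀ b ∈ A, ⁅p, b⁆ ∈ f.range := by
        rintro p ⟨i, rfl⟩ b hb
        have hbM : b ∈ M := hAM hb
        have hmem : ⁅((i : M) : M), (⟨b, hbM⟩ : M)⁆ ∈ I := by
          rw [← lie_skew]
          exact neg_mem (I.lie_mem i.2)
        have hco : ((⁅((i : M) : M), (⟨b, hbM⟩ : M)⁆ : M) : L) = ⁅(f i : L), b⁆ := rfl
        have := hIP _ hmem
        rwa [hco] at this
      have hPA' : ∀ p ∈ f.range, ∀ b ∈ A, ⁅p, b⁆ ∈ A := fun p _ b hb => A.lie_mem hb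
      have hPM : ∀ p ∈ f.range, p ∈ M := by
        rintro p ⟨i, rfl⟩
        exact ((i : M) : M).2
      -- the subalgebra `T = Im I + A` of `L`
      let T : LieSubalgebra F L :=
        { toSubmodule := f.range.toSubmodule ⊔ A.toSubmodule
          lie_mem' := by
            intro u v hu hv
            obtain ⟨p, hp, b, hb, rfl⟩ := Submodule.mem_sup.mp hu
            obtain ⟨q, hq, c, hc, rfl⟩ := Submodule.mem_sup.mp hv
            have e : ⁅p + b, q + c⁆ = ⁅p, q⁆ + (⁅p + b, c⁆ + ⁅b, q⁆) := by
              simp only [lie_add, add_lie]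
              abel
            rw [e]
            refine Submodule.add_mem _ (Submodule.mem_sup_left ?_)
              (Submodule.mem_sup_right (Submodule.add_mem _ ?_ ?_))
            · exact f.range.lie_mem hp hq
            · exact A.lie_mem hc
            · rw [← lie_skew]
              exact neg_mem (A.lie_mem hb) }
      have hmemT : ∀ w : L, w ∈ T ↔ w ∈ f.range.toSubmodule ⊔ A.toSubmodule :=
        fun w => Iff.rfl
      -- `T` is nilpotent of class at most 2
      let K : LieSubmodule F (↥T) (↥T) :=
        { carrier := {w : ↥T | ((w : L) ∈ f.range) ∧ ((w : L) ∈ A)}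
          add_mem' := fun {y z} hy hz =>
            ⟨Submodule.add_mem _ hy.1 hz.1, Submodule.add_mem _ hy.2 hz.2⟩
          zero_mem' := ⟨Submodule.zero_mem _, Submodule.zero_mem _⟩
          smul_mem' := fun c y hy => ⟨Submodule.smul_mem _ c hy.1, Submodule.smul_mem _ c hy.2⟩
          lie_mem := by
            rintro u w ⟨hwP, hwA⟩
            have hc : ((⁅u, w⁆ : ↥T) : L) = ⁅(u : L), (w : L)⁆ := rfl
            obtain ⟨p, hp, b, hb, hdec⟩ := Submodule.mem_sup.mp u.2
            constructor
            · show ((⁅u, w⁆ : ↥T) : L) ∈ f.range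
              rw [hc, ← hdec, add_lie, hAab b hb _ hwA, add_zero]
              exact hPA p hp _ hwA
            · show ((⁅u, w⁆ : ↥T) : L) ∈ A
              rw [hc]
              exact A.lie_mem hwA }
      have hlcs1 : LieModule.lowerCentralSeries F (↥T) (↥T) 1 ≤ K := by
        rw [show (1 : ℕ) = 0 + 1 from rfl, LieModule.lowerCentralSeries_succ]
        rw [LieSubmodule.lieIdeal_oper_eq_span, LieSubmodule.lieSpan_le]
        rintro w ⟨u, v, rfl⟩
        obtain ⟨p, hp, b, hb, hdu⟩ := Submodule.mem_sup.mp ((u : ↥T)).2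
        obtain ⟨q, hq, c, hc, hdv⟩ := Submodule.mem_sup.mp ((v : ↥T)).2
        have hcoe : ((⁅(u : ↥T), (v : ↥T)⁆ : ↥T) : L) = ⁅((u : ↥T) : L), ((v : ↥T) : L)⁆ := rfl
        have e : ⁅((u : ↥T) : L), ((v : ↥T) : L)⁆ = ⁅p, c⁆ + ⁅b, q⁆ := by
          rw [← hdu, ← hdv]
          rw [add_lie, lie_add, lie_add, hPP p hp q hq, hAab b hb c hc, zero_add, add_zero]
        constructor
        · show ((⁅(u : ↥T), (v : ↥T)⁆ : ↥T) : L) ∈ f.range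
          rw [hcoe, e]
          refine Submodule.add_mem _ (hPA p hp c hc) ?_
          rw [← lie_skew]
          exact neg_mem (hPA q hq b hb)
        · show ((⁅(u : ↥T), (v : ↥T)⁆ : ↥T) : L) ∈ A
          rw [hcoe, e]
          refine Submodule.add_mem _ (A.lie_mem hc) ?_
          rw [← lie_skew]
          exact neg_mem (A.lie_mem hb)
      have hlcs2 : LieModule.lowerCentralSeries F (↥T) (↥T) 2 = ⊥ := by
        rw [eq_bot_iff]
        have h21 : LieModule.lowerCentralSeries F (↥T) (↥T) 2 ≤ ⁅(⊤ : LieIdeal F (↥T)), K⁆ := by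
          rw [show (2 : ℕ) = 1 + 1 from rfl, LieModule.lowerCentralSeries_succ]
          exact LieSubmodule.mono_lie_right _ hlcs1
        refine le_trans h21 ?_
        rw [LieSubmodule.lieIdeal_oper_eq_span, LieSubmodule.lieSpan_le]
        rintro w ⟨u, v, rfl⟩
        have hv := v.2
        obtain ⟨hvP, hvA⟩ := hv
        obtain ⟨p, hp, b, hb, hdu⟩ := Submodule.mem_sup.mp ((u : ↥T)).2
        simp only [SetLike.mem_coe, LieSubmodule.mem_bot]
        apply Subtype.ext
        show ⁅((u : ↥T) : L), ((v : ↥T) : L)⁆ = (0 : L)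
        rw [← hdu, add_lie, hPP p hp _ hvP, hAab b hb _ hvA, add_zero]
      haveI hTnil : LieRing.IsNilpotent T := LieModule.IsNilpotent.mk _ hlcs2
      have hTab := hAalg T hTnil
      rw [hmemA']
      apply hCent
      intro b hb
      have hzT : (z : L) ∈ T := Submodule.mem_sup_left (hIP z hz)
      have hbT : b ∈ T := Submodule.mem_sup_right hb
      have ht := hTab.trivial ⟨(z : L), hzT⟩ ⟨b, hbT⟩
      have h2 := congrArg (Subtype.val) ht
      rw [LieSubalgebra.coe_bracket] at h2
      exact h2
    exact (hmemA' x).mp (key hx)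
  · intro hx
    exact le_sSup (show A' ∈ {I : LieIdeal F M | LieRing.IsNilpotent I} from hA'nilp)
      ((hmemA' x).mpr hx)
end
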